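/- arXiv:2108.11015 — 8 statements merged into one kernel-verified Lean document; each statement's English description precedes it below -/
import Mathlib

section
/- Let b_0, ..., b_{k-1} be linearly independent vectors in ℝ^n forming the columns of B, and let D = B·(B^T·B)^{-1} with columns d_0, ..., d_{k-1}. Then the length of the last Gram-Schmidt vector of B satisfies ‖b̃_{k-1}‖₂ = 1/‖d_{k-1}‖₂. -/
open Submodule Matrix Finset
open scoped RealInnerProductSpace
open InnerProductSpace

theorem stmt3 (n k : ℕ) (b : Fin (k + 1) → EuclideanSpace ℝ (Fin n))
    (hb : LinearIndependent ℝ b)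
    (B : Matrix (Fin n) (Fin (k + 1)) ℝ) (hB : ∀ i j, B i j = b j i)
    (D : Matrix (Fin n) (Fin (k + 1)) ℝ)
    (hD : D = B * (Matrix.transpose B * B)⁻¹) :
    haveI : WellFoundedLT (Fin (k + 1)) := Finite.to_wellFoundedLT
    ‖InnerProductSpace.gramSchmidt ℝ b (Fin.last k)‖ = 1 / Real.sqrt (∑ i, D i (Fin.last k) ^ 2) := by
  classical
  haveI : WellFoundedLT (Fin (k + 1)) := Finite.to_wellFoundedLT
  have sum_apply : ∀ (f : Fin (k + 1) → EuclideanSpace ℝ (Fin n)) (i : Fin n),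
      (∑ j, f j) i = ∑ j, f j i := fun f i => by simp
  set g : EuclideanSpace ℝ (Fin n) := gramSchmidt ℝ b (Fin.last k) with hg
  set d : EuclideanSpace ℝ (Fin n) := WithLp.toLp 2 (fun i => D i (Fin.last k) : Fin n → ℝ) with hd
  -- B.mulVec x = 0 → x = 0
  have hBmul : ∀ x : Fin (k + 1) → ℝ, B.mulVec x = 0 → x = 0 := by
    intro x hx
    have hsum : ∑ j, x j • b j = 0 := by
      ext i
      have := congrFun hx i
      rw [sum_apply]
      simpa [Matrix.mulVec, dotProduct, hB, mul_comm] using this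
    exact funext (Fintype.linearIndependent_iff.mp hb x hsum)
  have hinj : Function.Injective (Bᵀ * B).mulVec := by
    intro x y hxy
    have h0 : (Bᵀ * B).mulVec (x - y) = 0 := by
      rw [Matrix.mulVec_sub, hxy, sub_self]
    have h1 : B.mulVec (x - y) ⬝ᵥ B.mulVec (x - y) = 0 := by
      have := congrArg (fun v => (x - y) ⬝ᵥ v) h0
      simpa [← Matrix.mulVec_mulVec, Matrix.dotProduct_mulVec, Matrix.vecMul_transpose] using this
    have h2 : B.mulVec (x - y) = 0 := dotProduct_self_eq_zero.mp h1
    have := hBmul _ h2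
    exact sub_eq_zero.mp this
  have hunit : IsUnit (Bᵀ * B).det :=
    (Matrix.isUnit_iff_isUnit_det _).mp (Matrix.mulVec_injective_iff_isUnit.mp hinj)
  have hinv : (Bᵀ * B) * (Bᵀ * B)⁻¹ = 1 := Matrix.mul_nonsing_inv _ hunit
  have hBD : Bᵀ * D = 1 := by rw [hD, ← Matrix.mul_assoc, hinv]
  have hbd : ∀ j, ⟪b j, d⟫ = if j = Fin.last k then 1 else 0 := by
    intro j
    have h := congrFun (congrFun hBD j) (Fin.last k)
    simp only [Matrix.mul_apply, Matrix.one_apply, Matrix.transpose_apply, hB] at h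
    simpa [PiLp.inner_apply, RCLike.inner_apply, conj_trivial, hd, mul_comm] using h
  have hd_span : d ∈ span ℝ (Set.range b) := by
    have : d = ∑ j, (Bᵀ * B)⁻¹ j (Fin.last k) • b j := by
      ext i
      rw [sum_apply]
      simp [hd, hD, Matrix.mul_apply, hB, mul_comm]
    rw [this]
    exact Submodule.sum_mem _ fun j _ =>
      Submodule.smul_mem _ _ (Submodule.subset_span ⟨j, rfl⟩)
  have horth : ∀ (v : EuclideanSpace ℝ (Fin n)) (s : Set (EuclideanSpace ℝ (Fin n))),
      (∀ w ∈ s, ⟪w, v⟫ = 0) → span ℝ s ≤ (ℝ ∙ v)ᗮ := fun v s h =>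
    span_le.mpr fun w hw => Submodule.mem_orthogonal_singleton_iff_inner_left.mpr (h w hw)
  have c1 : ∀ j, j ≠ Fin.last k → ⟪gramSchmidt ℝ b j, d⟫ = 0 := by
    intro j hj
    have hjm : gramSchmidt ℝ b j ∈ span ℝ (b '' Set.Iic j) :=
      gramSchmidt_mem_span ℝ b le_rfl
    have hle : span ℝ (b '' Set.Iic j) ≤ (ℝ ∙ d)ᗮ := by
      apply horth
      rintro w ⟨i, hi, rfl⟩
      have : i ≠ Fin.last k :=
        ne_of_lt (lt_of_le_of_lt hi (lt_of_le_of_ne (Fin.le_last j) hj))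
      rw [hbd i, if_neg this]
    exact Submodule.mem_orthogonal_singleton_iff_inner_left.mp (hle hjm)
  have gne : g ≠ 0 := gramSchmidt_ne_zero _ hb
  have c2 : ⟪g, d⟫ = 1 := by
    have hdef := gramSchmidt_def' ℝ b (Fin.last k)
    have h1 : ⟪b (Fin.last k), d⟫ = 1 := by rw [hbd, if_pos rfl]
    rw [hdef, inner_add_left, sum_inner] at h1
    have hz : ∀ i ∈ Finset.Iio (Fin.last k),
        ⟪(ℝ ∙ gramSchmidt ℝ b i).starProjection (b (Fin.last k)), d⟫ = 0 := by
      intro i hi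
      rw [starProjection_singleton, real_inner_smul_left,
        c1 i (ne_of_lt (Finset.mem_Iio.mp hi)), mul_zero]
    rw [Finset.sum_eq_zero hz, add_zero] at h1
    exact h1
  have hdg : d = (‖g‖ ^ 2)⁻¹ • g := by
    set u : EuclideanSpace ℝ (Fin n) := d - (‖g‖ ^ 2)⁻¹ • g with hu
    have hg_span : g ∈ span ℝ (Set.range b) :=
      span_mono (Set.image_subset_range b _) (gramSchmidt_mem_span ℝ b le_rfl)
    have hu_span : u ∈ span ℝ (Set.range b) :=
      Submodule.sub_mem _ hd_span (Submodule.smul_mem _ _ hg_span)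
    have hu_orth : ∀ j, ⟪gramSchmidt ℝ b j, u⟫ = 0 := by
      intro j
      rw [hu, inner_sub_right, real_inner_smul_right]
      by_cases hj : j = Fin.last k
      · subst hj
        rw [c2, real_inner_self_eq_norm_sq]
        field_simp [norm_ne_zero_iff.mpr gne]
        rw [← hg]
        ring
      · rw [c1 j hj, hg, gramSchmidt_orthogonal ℝ b hj, mul_zero, sub_zero]
    have hle : span ℝ (Set.range b) ≤ (ℝ ∙ u)ᗮ := by
      rw [← span_gramSchmidt ℝ b]
      apply horth
      rintro w ⟨j, rfl⟩
      exact hu_orth j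
    have h0 : ⟪u, u⟫ = 0 :=
      Submodule.mem_orthogonal_singleton_iff_inner_left.mp (hle hu_span)
    have : u = 0 := inner_self_eq_zero.mp h0
    rw [hu] at this
    exact (sub_eq_zero.mp this).symm ▸ rfl
  have hgn : ‖g‖ ≠ 0 := norm_ne_zero_iff.mpr gne
  have hnd : Real.sqrt (∑ i, D i (Fin.last k) ^ 2) = ‖d‖ := by
    rw [EuclideanSpace.norm_eq]
    congr 1
    apply Finset.sum_congr rfl
    intro i _
    simp [hd, Real.norm_eq_abs, sq_abs]
  have hdnorm : ‖d‖ = ‖g‖⁻¹ := by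
    rw [hdg, norm_smul, norm_inv, norm_pow, norm_norm]
    field_simp
  rw [hnd, hdnorm, one_div, inv_inv]
end

section
/- Let C = F_n^{-1}·Λ·F_n be a real n×n circulant matrix with all eigenvalues λ_0, ..., λ_{n-1} nonzero. Then the length of the last Gram-Schmidt vector of the columns of C satisfies ‖C̃_{n-1}‖₂ ≥ (1/√n) · min_{0≤i≤n-1} |λ_i|. -/
theorem stmt4 (n : ℕ) (c : Fin (n + 1) → ℝ)
    (ω : ℂ) (hω : ω = Complex.exp (2 * Real.pi * Complex.I / (n + 1)))
    (lam : Fin (n + 1) → ℂ)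
    (hlam : ∀ i, lam i = ∑ j : Fin (n + 1), (c j : ℂ) * ω ^ (i.val * j.val))
    (hne : ∀ i, lam i ≠ 0)
    (b : Fin (n + 1) → EuclideanSpace ℝ (Fin (n + 1)))
    (hb : ∀ j i, b j i = c (j - i)) :
    haveI : WellFoundedLT (Fin (n + 1)) := Finite.to_wellFoundedLT
    (1 / Real.sqrt (n + 1)) *
        (Finset.univ.inf' Finset.univ_nonempty fun i => ‖lam i‖) ≤
      ‖InnerProductSpace.gramSchmidt ℝ b (Fin.last n)‖ := by
  have prim : IsPrimitiveRoot ω (n+1) := by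
    rw [hω]
    have := Complex.isPrimitiveRoot_exp (n+1) (Nat.succ_ne_zero n)
    convert this using 3
    push_cast; ring
  have hωN : ω ^ (n+1) = 1 := prim.pow_eq_one
  have hmod : ∀ x : ℕ, ω ^ x = ω ^ (x % (n+1)) := by
    intro x
    conv_lhs => rw [← Nat.div_add_mod x (n+1)]
    rw [pow_add, pow_mul, hωN, one_pow, one_mul]
  have hadd : ∀ (t : ℕ) (a a' : Fin (n+1)),
      ω ^ (t * ((a + a').val)) = ω ^ (t * a.val) * ω ^ (t * a'.val) := by
    intro t a a'
    rw [← pow_add, hmod (t * ((a+a').val)), hmod (t*a.val + t*a'.val)]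
    congr 1
    have h1 : (a + a').val ≡ (a.val + a'.val) [MOD n+1] := by
      rw [Fin.val_add]; exact Nat.mod_modEq _ _
    calc t * (a + a').val % (n+1) = t * (a.val + a'.val) % (n+1) :=
          Nat.ModEq.mul_left t h1
      _ = (t * a.val + t * a'.val) % (n+1) := by ring_nf
  have hNc : ((n:ℂ)+1) ≠ 0 := by exact Nat.cast_add_one_ne_zero n
  set s : Fin (n+1) → ℂ :=
    fun i => ((n:ℂ)+1)⁻¹ * ∑ t : Fin (n+1), ω ^ (t.val * (Fin.last n - i).val) / lam t with hs
  have key : ∀ j : Fin (n+1), ∑ i, s i * (c (j - i) : ℂ)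
      = if j = Fin.last n then 1 else 0 := by
    intro j
    have step1 : ∀ t : Fin (n+1),
        ∑ i : Fin (n+1), ω ^ (t.val * (Fin.last n - i).val) * (c (j - i) : ℂ)
          = ω ^ (t.val * (Fin.last n - j).val) * lam t := by
      intro t
      rw [hlam t, Finset.mul_sum,
        ← Equiv.sum_comp (Equiv.subLeft j)
          (fun i => ω ^ (t.val * (Fin.last n - i).val) * (c (j - i) : ℂ))]
      apply Finset.sum_congr rfl
      intro m _
      simp only [Equiv.subLeft_apply]
      have h2 : j - (j - m) = m := by abel
      have h3 : Fin.last n - (j - m) = (Fin.last n - j) + m := by abel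
      rw [h2, h3, hadd]
      ring
    have expand : ∑ i, s i * (c (j - i) : ℂ)
        = ((n:ℂ)+1)⁻¹ * ∑ t : Fin (n+1),
            (∑ i : Fin (n+1), ω ^ (t.val * (Fin.last n - i).val) * (c (j - i) : ℂ)) / lam t := by
      calc ∑ i, s i * (c (j - i) : ℂ)
          = ∑ i : Fin (n+1), ∑ t : Fin (n+1),
              ((n:ℂ)+1)⁻¹ * (ω ^ (t.val * (Fin.last n - i).val) * (c (j - i) : ℂ) / lam t) := by
            apply Finset.sum_congr rfl; intro i _
            rw [hs]; simp only
            rw [mul_assoc, Finset.sum_mul, Finset.mul_sum]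
            apply Finset.sum_congr rfl; intro t _; ring
        _ = ∑ t : Fin (n+1), ∑ i : Fin (n+1),
              ((n:ℂ)+1)⁻¹ * (ω ^ (t.val * (Fin.last n - i).val) * (c (j - i) : ℂ) / lam t) :=
            Finset.sum_comm
        _ = _ := by
            rw [Finset.mul_sum]
            apply Finset.sum_congr rfl; intro t _
            rw [Finset.sum_div, Finset.mul_sum]
    rw [expand]
    have expand2 : ∀ t : Fin (n+1),
        (∑ i : Fin (n+1), ω ^ (t.val * (Fin.last n - i).val) * (c (j - i) : ℂ)) / lam t
          = ω ^ (t.val * (Fin.last n - j).val) := by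
      intro t
      rw [step1 t, mul_div_assoc, div_self (hne t), mul_one]
    rw [Finset.sum_congr rfl fun t _ => expand2 t]
    by_cases hj : j = Fin.last n
    · subst hj
      simp [Fin.sub_self, hNc]
    · set k : ℕ := (Fin.last n - j).val with hk
      have hk0 : k ≠ 0 := by
        intro h
        exact (sub_ne_zero.mpr (Ne.symm hj)) (Fin.val_injective (by simpa [hk] using h))
      have hklt : k < n + 1 := (Fin.last n - j).is_lt
      have hsum : ∑ t : Fin (n+1), ω ^ (t.val * k) = 0 := by
        have : ∀ t : Fin (n+1), ω ^ (t.val * k) = (ω ^ k) ^ t.val := by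
          intro t; rw [mul_comm, pow_mul]
        rw [Finset.sum_congr rfl fun t _ => this t, Fin.sum_univ_eq_sum_range]
        rw [geom_sum_eq (prim.pow_ne_one_of_pos_of_lt hk0 hklt)]
        rw [← pow_mul, mul_comm k, pow_mul, hωN, one_pow, sub_self, zero_div]
      rw [hsum, mul_zero, if_neg hj]
  haveI : WellFoundedLT (Fin (n + 1)) := Finite.to_wellFoundedLT
  show (1 / Real.sqrt (n + 1)) *
        (Finset.univ.inf' Finset.univ_nonempty fun i => ‖lam i‖) ≤
      ‖InnerProductSpace.gramSchmidt ℝ b (Fin.last n)‖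
  set r : EuclideanSpace ℝ (Fin (n+1)) := WithLp.toLp 2 (fun i => (s i).re) with hr
  have hrb : ∀ j : Fin (n+1), (inner ℝ r (b j) : ℝ) = if j = Fin.last n then 1 else 0 := by
    intro j
    have h1 : (inner ℝ r (b j) : ℝ) = ∑ i : Fin (n+1), (s i).re * c (j - i) := by
      rw [PiLp.inner_apply]
      apply Finset.sum_congr rfl; intro i _
      rw [RCLike.inner_apply, starRingEnd_apply, star_trivial, hb j i, hr]
      rw [PiLp.toLp_apply, mul_comm]
    have h2 := congrArg Complex.re (key j)
    rw [Complex.re_sum] at h2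
    simp only [Complex.mul_re, Complex.ofReal_re, Complex.ofReal_im, mul_zero, sub_zero] at h2
    rw [h1, h2, apply_ite Complex.re, Complex.one_re, Complex.zero_re]
  have hper : ∀ i : Fin (n+1), i < Fin.last n → (inner ℝ r (InnerProductSpace.gramSchmidt ℝ b i) : ℝ) = 0 := by
    intro i hi
    have hmem := InnerProductSpace.gramSchmidt_mem_span ℝ b (le_refl i)
    have hz : ∀ x ∈ Submodule.span ℝ (b '' Set.Iic i), (inner ℝ r x : ℝ) = 0 := by
      intro x hx
      induction hx using Submodule.span_induction with
      | mem x hx =>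
        obtain ⟨j, hj, rfl⟩ := hx
        rw [hrb, if_neg]
        intro h; rw [h] at hj
        exact absurd (lt_of_le_of_lt hj hi) (lt_irrefl _)
      | zero => simp
      | add x y _ _ hx hy => rw [inner_add_right, hx, hy, add_zero]
      | smul a x _ hx => rw [inner_smul_right, hx, mul_zero]
    exact hz _ hmem
  have hgs : (inner ℝ r (InnerProductSpace.gramSchmidt ℝ b (Fin.last n)) : ℝ) = 1 := by
    have hdef := congrArg (fun x => (inner ℝ r x : ℝ)) (InnerProductSpace.gramSchmidt_def'' ℝ b (Fin.last n))
    simp only [inner_add_right, inner_sum, inner_smul_right] at hdef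
    rw [hrb, if_pos rfl] at hdef
    rw [Finset.sum_eq_zero (fun i hi => by
      rw [hper i (Finset.mem_Iio.mp hi), mul_zero]), add_zero] at hdef
    exact hdef.symm
  set m : ℝ := Finset.univ.inf' Finset.univ_nonempty fun i => ‖lam i‖ with hm
  have hmpos : 0 < m := by
    rw [hm, Finset.lt_inf'_iff]
    intro i _
    exact norm_pos_iff.mpr (hne i)
  have hmle : ∀ i, m ≤ ‖lam i‖ := fun i =>
    Finset.inf'_le _ (Finset.mem_univ i)
  have hωabs : ‖ω‖ = 1 := by
    rw [hω, Complex.norm_exp]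
    norm_num [Complex.div_re]
  have hsb : ∀ i, ‖s i‖ ≤ 1 / m := by
    intro i
    rw [hs]
    simp only
    rw [norm_mul, norm_inv]
    have habs : ‖((n:ℂ)+1)‖ = (n:ℝ)+1 := by
      rw [show ((n:ℂ)+1) = ((n+1:ℕ):ℂ) by push_cast; ring, Complex.norm_natCast]
      push_cast; ring
    rw [habs]
    have hb1 : ‖∑ t : Fin (n+1), ω ^ (t.val * (Fin.last n - i).val) / lam t‖
        ≤ ((n:ℝ)+1) * (1/m) := by
      refine le_trans (norm_sum_le _ _) ?_
      have : ∀ t : Fin (n+1),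
          ‖ω ^ (t.val * (Fin.last n - i).val) / lam t‖ ≤ 1/m := by
        intro t
        rw [norm_div, norm_pow, hωabs, one_pow]
        exact one_div_le_one_div_of_le hmpos (hmle t)
      refine le_trans (Finset.sum_le_sum fun t _ => this t) ?_
      rw [Finset.sum_const, Finset.card_univ, Fintype.card_fin, nsmul_eq_mul]
      push_cast; ring_nf; exact le_refl _
    calc ((n:ℝ)+1)⁻¹ * ‖∑ t : Fin (n+1), ω ^ (t.val * (Fin.last n - i).val) / lam t‖
        ≤ ((n:ℝ)+1)⁻¹ * (((n:ℝ)+1) * (1/m)) := by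
          apply mul_le_mul_of_nonneg_left hb1 (by positivity)
      _ = 1/m := by field_simp
  have hrnorm : ‖r‖ ≤ Real.sqrt (n+1) * (1/m) := by
    rw [EuclideanSpace.norm_eq]
    have hbound : ∑ i : Fin (n+1), ‖r i‖^2 ≤ (n+1) * (1/m)^2 := by
      have : ∀ i : Fin (n+1), ‖r i‖^2 ≤ (1/m)^2 := by
        intro i
        have h1 : ‖r i‖ ≤ ‖s i‖ := by
          rw [hr]; simpa using Complex.abs_re_le_norm (s i)
        have h2 : ‖r i‖ ≤ 1/m := le_trans h1 (hsb i)
        exact pow_le_pow_left₀ (norm_nonneg _) h2 2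
      refine le_trans (Finset.sum_le_sum fun i _ => this i) ?_
      rw [Finset.sum_const, Finset.card_univ, Fintype.card_fin, nsmul_eq_mul]
      push_cast; ring_nf; exact le_refl _
    refine le_trans (Real.sqrt_le_sqrt hbound) ?_
    rw [Real.sqrt_mul (by positivity), Real.sqrt_sq (by positivity)]
  have hcs := real_inner_le_norm r (InnerProductSpace.gramSchmidt ℝ b (Fin.last n))
  rw [hgs] at hcs
  have hg0 : (0:ℝ) ≤ ‖InnerProductSpace.gramSchmidt ℝ b (Fin.last n)‖ := norm_nonneg _
  have hsq : 0 < Real.sqrt ((n:ℝ)+1) := Real.sqrt_pos.mpr (by positivity)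
  have hsq' : (Real.sqrt ((n:ℝ)+1) : ℝ) = Real.sqrt (n+1) := by push_cast; ring_nf
  have key2 : (1:ℝ) ≤ Real.sqrt ((n:ℝ)+1) * (1/m) * ‖InnerProductSpace.gramSchmidt ℝ b (Fin.last n)‖ := by
    calc (1:ℝ) ≤ ‖r‖ * ‖InnerProductSpace.gramSchmidt ℝ b (Fin.last n)‖ := hcs
      _ ≤ Real.sqrt ((n:ℝ)+1) * (1/m) * ‖InnerProductSpace.gramSchmidt ℝ b (Fin.last n)‖ := by
          apply mul_le_mul_of_nonneg_right _ hg0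
          rw [hsq']; exact hrnorm
  rw [div_mul_eq_mul_div, one_mul, div_le_iff₀ (hsq' ▸ hsq)]
  have hmm : m * (1/m) = 1 := by field_simp
  nlinarith [key2, hmpos, hsq, hg0, hsq' ▸ hsq]
end

section
/- For 0 ≤ j ≤ k-1 < n and ω = e^{2πi/n}, the absolute value of the product ∏_{0≤ℓ≤k-1, ℓ≠j} (ω^{-ℓ} − ω^{-j}) equals n / (2^{n-k} · ∏_{ℓ=k-j}^{n-j-1} sin(πℓ/n)). -/
open Finset

lemma abs_one_sub_exp_aux (θ : ℝ) :
    ‖1 - Complex.exp (θ * Complex.I)‖ = 2 * |Real.sin (θ / 2)| := by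
  rw [Complex.norm_def, Complex.normSq_apply]
  simp only [Complex.sub_re, Complex.sub_im, Complex.one_re, Complex.one_im,
    Complex.exp_ofReal_mul_I_re, Complex.exp_ofReal_mul_I_im]
  have h : (1 - Real.cos θ) * (1 - Real.cos θ) + (0 - Real.sin θ) * (0 - Real.sin θ)
      = (2 * Real.sin (θ / 2)) ^ 2 := by
    have h1 := Real.sin_sq_add_cos_sq θ
    have h2 := Real.sin_sq_add_cos_sq (θ / 2)
    have h3 := Real.cos_two_mul (θ / 2)
    rw [show 2 * (θ / 2) = θ by ring] at h3
    nlinarith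
  rw [h, Real.sqrt_sq_eq_abs, abs_mul]
  norm_num

lemma abs_exp_sub_exp_aux (a b : ℝ) :
    ‖Complex.exp (a * Complex.I) - Complex.exp (b * Complex.I)‖
      = 2 * |Real.sin ((a - b) / 2)| := by
  have h : Complex.exp (a * Complex.I) - Complex.exp (b * Complex.I)
      = Complex.exp (b * Complex.I) * (Complex.exp (((a - b : ℝ)) * Complex.I) - 1) := by
    rw [mul_sub, mul_one, ← Complex.exp_add]
    congr 2
    push_cast
    ring
  rw [h, norm_mul, Complex.norm_exp_ofReal_mul_I, one_mul, ← neg_sub,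
    norm_neg, abs_one_sub_exp_aux]

lemma prod_one_sub_pow_aux (n : ℕ) (hn : 0 < n) {ω : ℂ} (hω : IsPrimitiveRoot ω n) :
    ∏ i ∈ Finset.Ico 1 n, ((1 : ℂ) - ω ^ i) = n := by
  have hpoly : (Polynomial.X : Polynomial ℂ) ^ n - 1
      = ∏ i ∈ Finset.range n, (Polynomial.X - Polynomial.C (ω ^ i)) := by
    rw [Polynomial.X_pow_sub_one_eq_prod hn hω]
    symm
    apply Finset.prod_bij (fun i _ => ω ^ i)
    · intro a ha
      exact Polynomial.mem_nthRootsFinset hn 1 |>.2 (by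
        rw [← pow_mul, mul_comm, pow_mul, hω.pow_eq_one, one_pow])
    · intro a ha b hb hab
      exact hω.pow_inj (Finset.mem_range.mp ha) (Finset.mem_range.mp hb) hab
    · intro b hb
      haveI : NeZero n := ⟨hn.ne'⟩
      obtain ⟨i, hi, rfl⟩ := hω.eq_pow_of_pow_eq_one
        ((Polynomial.mem_nthRootsFinset hn 1).1 hb)
      exact ⟨i, Finset.mem_range.mpr hi, rfl⟩
    · intro a ha
      rfl
  have key : (Polynomial.X - Polynomial.C (1 : ℂ)) *
      ∏ i ∈ Finset.Ico 1 n, (Polynomial.X - Polynomial.C (ω ^ i))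
      = (Polynomial.X - Polynomial.C (1 : ℂ)) * ∑ i ∈ Finset.range n, Polynomial.X ^ i := by
    rw [mul_comm (Polynomial.X - Polynomial.C (1 : ℂ)) (∑ i ∈ Finset.range n, Polynomial.X ^ i)]
    rw [Polynomial.C_1, geom_sum_mul, hpoly, Finset.range_eq_Ico,
      Finset.prod_eq_prod_Ico_succ_bot hn]
    simp
  have hX : (Polynomial.X - Polynomial.C (1 : ℂ)) ≠ 0 := Polynomial.X_sub_C_ne_zero 1
  have key2 := mul_left_cancel₀ hX key
  have := congrArg (Polynomial.eval 1) key2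
  simpa [Polynomial.eval_prod, Polynomial.eval_finset_sum] using this

lemma prod_two_sin_aux (n : ℕ) (hn : 0 < n) :
    ∏ m ∈ Finset.Ico 1 n, (2 * Real.sin (Real.pi * m / n)) = n := by
  have hn' : (n : ℂ) ≠ 0 := Nat.cast_ne_zero.mpr hn.ne'
  have hω := Complex.isPrimitiveRoot_exp n hn.ne'
  have h := congrArg (‖·‖) (prod_one_sub_pow_aux n hn hω)
  rw [norm_prod, Complex.norm_natCast] at h
  have hcong : ∏ x ∈ Finset.Ico 1 n,
      ‖1 - Complex.exp (2 * Real.pi * Complex.I / n) ^ x‖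
      = ∏ m ∈ Finset.Ico 1 n, (2 * Real.sin (Real.pi * m / n)) := by
    apply Finset.prod_congr rfl
    intro m hm
    obtain ⟨hm1, hm2⟩ := Finset.mem_Ico.mp hm
    have hpow : Complex.exp (2 * Real.pi * Complex.I / n) ^ m
        = Complex.exp ((2 * Real.pi * m / n : ℝ) * Complex.I) := by
      rw [← Complex.exp_nat_mul,
        show (m : ℂ) * (2 * (Real.pi : ℂ) * Complex.I / n)
          = ((2 * Real.pi * m / n : ℝ) : ℂ) * Complex.I from by push_cast; ring]
    rw [hpow, abs_one_sub_exp_aux,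
      show (2 * Real.pi * (m : ℝ) / n) / 2 = Real.pi * m / n by ring]
    rw [abs_of_pos]
    apply Real.sin_pos_of_pos_of_lt_pi
    · have : (0 : ℝ) < m := by exact_mod_cast hm1
      have : (0 : ℝ) < n := by exact_mod_cast hn
      positivity
    · rw [div_lt_iff₀ (by exact_mod_cast hn)]
      have : (m : ℝ) < n := by exact_mod_cast hm2
      nlinarith [Real.pi_pos]
  rw [hcong] at h
  exact h

theorem stmt6 (n k j : ℕ) (hkn : k ≤ n) (hj : j < k)
    (ω : ℂ) (hω : ω = Complex.exp (2 * Real.pi * Complex.I / n)) :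
    ‖∏ ℓ ∈ (Finset.range k).erase j, (ω ^ (-(ℓ : ℤ)) - ω ^ (-(j : ℤ)))‖ =
      n / (2 ^ (n - k) * ∏ ℓ ∈ Finset.Ico (k - j) (n - j), Real.sin (Real.pi * ℓ / n)) := by
  have hjn : j < n := lt_of_lt_of_le hj hkn
  have hn : 0 < n := lt_of_le_of_lt (Nat.zero_le j) hjn
  have hnR : (0 : ℝ) < n := by exact_mod_cast hn
  have hnC : (n : ℂ) ≠ 0 := Nat.cast_ne_zero.mpr hn.ne'
  set F : ℕ → ℝ := fun m => 2 * Real.sin (Real.pi * m / n) with hF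
  -- per-factor absolute value
  have hz : ∀ a : ℕ, ω ^ (-(a : ℤ)) = Complex.exp ((-(2 * Real.pi * a / n) : ℝ) * Complex.I) := by
    intro a
    rw [hω, ← Complex.exp_int_mul]
    rw [show ((-(a : ℤ) : ℤ) : ℂ) * (2 * (Real.pi : ℂ) * Complex.I / n)
        = ((-(2 * Real.pi * a / n) : ℝ) : ℂ) * Complex.I from by
      push_cast
      ring]
  have habs : ∀ ℓ : ℕ, ‖ω ^ (-(ℓ : ℤ)) - ω ^ (-(j : ℤ))‖
      = 2 * |Real.sin (Real.pi * ((j : ℝ) - ℓ) / n)| := by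
    intro ℓ
    rw [hz, hz, abs_exp_sub_exp_aux,
      show (-(2 * Real.pi * (ℓ : ℝ) / n) - -(2 * Real.pi * (j : ℝ) / n)) / 2
        = Real.pi * ((j : ℝ) - ℓ) / n by ring]
  -- sin positivity helper
  have hsin_pos : ∀ m : ℕ, 1 ≤ m → m < n → 0 < Real.sin (Real.pi * m / n) := by
    intro m h1 h2
    apply Real.sin_pos_of_pos_of_lt_pi
    · have : (0 : ℝ) < m := by exact_mod_cast h1
      positivity
    · rw [div_lt_iff₀ hnR]
      have : (m : ℝ) < n := by exact_mod_cast h2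
      nlinarith [Real.pi_pos]
  -- split the product
  have herase : (Finset.range k).erase j = Finset.range j ∪ Finset.Ico (j + 1) k := by
    ext x
    simp only [Finset.mem_erase, Finset.mem_range, Finset.mem_union, Finset.mem_Ico]
    omega
  have hdisj : Disjoint (Finset.range j) (Finset.Ico (j + 1) k) := by
    simp only [Finset.disjoint_left, Finset.mem_range, Finset.mem_Ico]
    omega
  rw [norm_prod, herase, Finset.prod_union hdisj]
  -- left chunk : ℓ < j  ↦  m = n - j + ℓ ∈ Ico (n-j) n
  have h1 : ∏ ℓ ∈ Finset.range j, ‖ω ^ (-(ℓ : ℤ)) - ω ^ (-(j : ℤ))‖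
      = ∏ m ∈ Finset.Ico (n - j) n, F m := by
    rw [Finset.prod_Ico_eq_prod_range, show n - (n - j) = j by omega]
    apply Finset.prod_congr rfl
    intro ℓ hℓ
    have hℓj : ℓ < j := Finset.mem_range.mp hℓ
    rw [habs, hF]
    have hcast : ((n - j + ℓ : ℕ) : ℝ) = (n : ℝ) - j + ℓ := by
      rw [Nat.cast_add, Nat.cast_sub hjn.le]
    dsimp only
    rw [hcast, show Real.pi * ((n : ℝ) - j + ℓ) / n
        = Real.pi - Real.pi * ((j : ℝ) - ℓ) / n by field_simp; ring, Real.sin_pi_sub]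
    congr 1
    rw [abs_of_pos]
    have hlt : (0 : ℝ) < (j : ℝ) - ℓ := by
      have : (ℓ : ℝ) < j := by exact_mod_cast hℓj
      linarith
    apply Real.sin_pos_of_pos_of_lt_pi
    · positivity
    · rw [div_lt_iff₀ hnR]
      have hlt2 : (j : ℝ) - ℓ < n := by
        have : (j : ℝ) < n := by exact_mod_cast hjn
        have : (0 : ℝ) ≤ ℓ := Nat.cast_nonneg ℓ
        linarith
      nlinarith [Real.pi_pos, hlt]
  -- right chunk : ℓ > j  ↦  m = ℓ - j ∈ Ico 1 (k-j)
  have h2 : ∏ ℓ ∈ Finset.Ico (j + 1) k, ‖ω ^ (-(ℓ : ℤ)) - ω ^ (-(j : ℤ))‖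
      = ∏ m ∈ Finset.Ico 1 (k - j), F m := by
    rw [Finset.prod_Ico_eq_prod_range, Finset.prod_Ico_eq_prod_range,
      show k - (j + 1) = k - j - 1 by omega]
    apply Finset.prod_congr rfl
    intro i hi
    have hik : i < k - j - 1 := Finset.mem_range.mp hi
    rw [habs, hF]
    dsimp only
    rw [show Real.pi * ((j : ℝ) - (j + 1 + i : ℕ)) / n
        = -(Real.pi * ((1 + i : ℕ) : ℝ) / n) by push_cast; ring,
      Real.sin_neg, abs_neg]
    congr 1
    rw [abs_of_pos]
    exact hsin_pos (1 + i) (by omega) (by omega)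
  rw [h1, h2]
  -- combine
  have hkj1 : 1 ≤ k - j := by omega
  have hkjnj : k - j ≤ n - j := by omega
  have hnjn : n - j ≤ n := by omega
  have h1nj : 1 ≤ n - j := by omega
  have hsinpos' : ∀ m ∈ Finset.Ico (k - j) (n - j), 0 < Real.sin (Real.pi * m / n) := by
    intro m hm
    obtain ⟨ha, hb⟩ := Finset.mem_Ico.mp hm
    exact hsin_pos m (by omega) (by omega)
  have hden : 0 < (2 : ℝ) ^ (n - k) * ∏ ℓ ∈ Finset.Ico (k - j) (n - j),
      Real.sin (Real.pi * ℓ / n) := by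
    apply mul_pos (by positivity)
    exact Finset.prod_pos hsinpos'
  rw [eq_div_iff hden.ne']
  have hmid : (2 : ℝ) ^ (n - k) * ∏ ℓ ∈ Finset.Ico (k - j) (n - j),
      Real.sin (Real.pi * ℓ / n) = ∏ m ∈ Finset.Ico (k - j) (n - j), F m := by
    rw [hF]
    rw [Finset.prod_mul_distrib, Finset.prod_const, Nat.card_Ico,
      show n - j - (k - j) = n - k by omega]
  rw [hmid]
  have hBC : (∏ m ∈ Finset.Ico 1 (k - j), F m) * ∏ m ∈ Finset.Ico (k - j) (n - j), F m
      = ∏ m ∈ Finset.Ico 1 (n - j), F m := Finset.prod_Ico_consecutive F hkj1 hkjnj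
  have hfull : (∏ m ∈ Finset.Ico 1 (n - j), F m) * ∏ m ∈ Finset.Ico (n - j) n, F m
      = ∏ m ∈ Finset.Ico 1 n, F m := Finset.prod_Ico_consecutive F h1nj hnjn
  calc (∏ m ∈ Finset.Ico (n - j) n, F m) * (∏ m ∈ Finset.Ico 1 (k - j), F m)
        * ∏ m ∈ Finset.Ico (k - j) (n - j), F m
      = ((∏ m ∈ Finset.Ico 1 (k - j), F m) * ∏ m ∈ Finset.Ico (k - j) (n - j), F m)
        * ∏ m ∈ Finset.Ico (n - j) n, F m := by ring
    _ = ∏ m ∈ Finset.Ico 1 n, F m := by rw [hBC, hfull]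
    _ = n := prod_two_sin_aux n hn
end

section
/- Let q be a positive integer, B an integer with 0 < 2B+1 < q and gcd(2B+1, q) = 1, and f: ℤ_q → ℝ the normalized indicator of [-B,B]∩ℤ (value 1/√(2B+1) on [-B,B], 0 elsewhere). Then min over y ∈ ℤ_q of |f̂(y)| is at least 1/(q·√(q(2B+1))), where f̂ is the DFT of f over ℤ_q. -/
open Complex Finset Real

lemma sinb1 (q m : ℕ) (h1 : 0 < m) (h2 : 2*m ≤ q) :
    1/(q:ℝ) ≤ Real.sin (Real.pi * m / q) := by
  have hq : (0:ℝ) < q := by exact_mod_cast (by omega : 0 < q)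
  have hm : (1:ℝ) ≤ m := by exact_mod_cast h1
  have h2' : (2:ℝ)*m ≤ q := by exact_mod_cast h2
  have hπ := Real.pi_pos
  have hx : Real.pi * m / q ≤ Real.pi / 2 := by
    rw [div_le_div_iff₀ hq two_pos]; nlinarith
  have h := Real.mul_le_sin (x := Real.pi * m / q) (by positivity) hx
  refine le_trans ?_ h
  have : 2/Real.pi * (Real.pi * m / q) = 2*m/q := by field_simp
  rw [this, div_le_div_iff₀ hq hq]; nlinarith

lemma sinb (q m : ℕ) (h1 : 0 < m) (h2 : m < q) :
    1/(q:ℝ) ≤ Real.sin (Real.pi * m / q) := by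
  rcases le_or_gt (2*m) q with h|h
  · exact sinb1 q m h1 h
  · have hk1 : 0 < q - m := by omega
    have hk2 : 2*(q-m) ≤ q := by omega
    have hs := sinb1 q (q-m) hk1 hk2
    have hq : (0:ℝ) < q := by exact_mod_cast (by omega : 0 < q)
    have hc : ((q - m : ℕ):ℝ) = (q:ℝ) - m := by
      push_cast [Nat.cast_sub h2.le]; ring
    have heq : Real.pi * ((q - m : ℕ):ℝ) / q = Real.pi - Real.pi * m / q := by
      rw [hc]; field_simp
    rw [heq, Real.sin_pi_sub] at hs
    exact hs

lemma absexp_sq (θ : ℝ) :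
    ‖Complex.exp (θ*Complex.I) - 1‖^2 = 2 - 2*Real.cos θ := by
  rw [Complex.sq_norm, Complex.normSq_apply]
  simp [Complex.sub_re, Complex.sub_im, Complex.exp_ofReal_mul_I_re, Complex.exp_ofReal_mul_I_im]
  nlinarith [Real.sin_sq_add_cos_sq θ]

lemma absexp_lb (q m : ℕ) (h1 : 0 < m) (h2 : m < q) :
    2/(q:ℝ) ≤ ‖Complex.exp ((2*Real.pi*m/q : ℝ)*Complex.I) - 1‖ := by
  have hq : (0:ℝ) < q := by exact_mod_cast (by omega : 0 < q)
  have hs := sinb q m h1 h2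
  have hsq := absexp_sq (2*Real.pi*m/q)
  have hcos : Real.cos (2*Real.pi*m/q) = 1 - 2 * Real.sin (Real.pi*m/q)^2 := by
    have h2x : 2*Real.pi*m/q = 2*(Real.pi*m/q) := by ring
    rw [h2x, Real.cos_two_mul]
    nlinarith [Real.sin_sq_add_cos_sq (Real.pi*m/q)]
  rw [hcos] at hsq
  have habs : (0:ℝ) ≤ ‖Complex.exp ((2*Real.pi*m/q : ℝ)*Complex.I) - 1‖ :=
    norm_nonneg _
  have h4 : (2/(q:ℝ))^2 ≤ ‖Complex.exp ((2*Real.pi*m/q : ℝ)*Complex.I) - 1‖^2 := by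
    have h5 := pow_le_pow_left₀ (by positivity : (0:ℝ) ≤ 1/q) hs 2
    rw [hsq]
    ring_nf at h5 ⊢
    linarith [h5]
  calc 2/(q:ℝ) = Real.sqrt ((2/(q:ℝ))^2) := by rw [Real.sqrt_sq (by positivity)]
    _ ≤ Real.sqrt (‖Complex.exp ((2*Real.pi*m/q : ℝ)*Complex.I) - 1‖^2) :=
        Real.sqrt_le_sqrt h4
    _ = _ := Real.sqrt_sq habs

lemma expow (q c n : ℕ) (hq : 0 < q) :
    Complex.exp (2*Real.pi*Complex.I*n/q) ^ c
      = Complex.exp (((2*Real.pi*((c*n % q : ℕ) : ℝ)/q : ℝ)) * Complex.I) := by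
  rw [← Complex.exp_nat_mul]
  have hdm := Nat.div_add_mod (c*n) q
  set k := c*n/q with hk
  set m := c*n % q with hm
  have hnat : c*n = q*k+m := by omega
  have hcast : (c:ℂ)*(n:ℂ) = (q:ℂ)*k+m := by exact_mod_cast congrArg (Nat.cast : ℕ → ℂ) hnat
  have hqC : (q:ℂ) ≠ 0 := by exact_mod_cast hq.ne'
  have h1 : (c:ℂ) * (2*Real.pi*Complex.I*n/q)
      = (k:ℂ)*(2*Real.pi*Complex.I) + ((2*Real.pi*m/q : ℝ):ℂ)*Complex.I := by
    push_cast
    field_simp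
    linear_combination hcast
  rw [h1, Complex.exp_add]
  have h2 : (k:ℂ)*(2*Real.pi*Complex.I) = (k:ℕ)*(2*(Real.pi:ℂ)*Complex.I) := by push_cast; ring
  rw [h2, Complex.exp_nat_mul_two_pi_mul_I, one_mul]

theorem stmt8 (q B : ℕ) [NeZero q] (hB : 2 * B + 1 < q) (hgcd : Nat.gcd (2 * B + 1) q = 1)
    (f : ZMod q → ℝ)
    (hf : ∀ x : ZMod q, f x = if x.val ≤ B ∨ q - B ≤ x.val then 1 / Real.sqrt (2 * B + 1) else 0)
    (Fhat : ZMod q → ℂ)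
    (hFhat : ∀ y : ZMod q, Fhat y = (1 / Real.sqrt q : ℝ) * ∑ x : ZMod q,
      Complex.exp (2 * Real.pi * Complex.I * (x.val * y.val) / q) * (f x : ℂ)) :
    ∀ y : ZMod q, 1 / (q * Real.sqrt (q * (2 * B + 1))) ≤ ‖Fhat y‖ := by
  intro y
  have hqpos : 0 < q := Nat.pos_of_ne_zero (NeZero.ne q)
  have hqR : (0:ℝ) < q := by exact_mod_cast hqpos
  have hqC : (q:ℂ) ≠ 0 := by exact_mod_cast hqpos.ne'
  have hBq : B < q := by omega
  set ω : ℂ := Complex.exp (2*Real.pi*Complex.I*(y.val : ℕ)/q) with hω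
  have hω0 : ω ≠ 0 := Complex.exp_ne_zero _
  -- ω as exp(θ I)
  have hωre : (2*Real.pi*Complex.I*(y.val:ℕ)/q : ℂ) = ((2*Real.pi*y.val/q : ℝ) : ℂ) * Complex.I := by
    push_cast; ring
  have hωabs : ‖ω‖ = 1 := by
    rw [hω, hωre, Complex.norm_exp_ofReal_mul_I]
  have hωq : ω ^ q = 1 := by
    rw [hω, ← Complex.exp_nat_mul]
    have h : (q:ℂ) * (2*Real.pi*Complex.I*(y.val:ℕ)/q) = (y.val:ℕ) * (2*Real.pi*Complex.I) := by
      field_simp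
    rw [h, Complex.exp_nat_mul_two_pi_mul_I]
  have hterm : ∀ x : ZMod q,
      Complex.exp (2 * Real.pi * Complex.I * ((x.val:ℕ) * (y.val:ℕ)) / q) = ω ^ x.val := by
    intro x
    rw [hω, ← Complex.exp_nat_mul]
    congr 1; push_cast; ring
  -- the embedding
  set e : ℕ → ZMod q := fun j => ((j + (q - B) : ℕ) : ZMod q) with he
  have hval : ∀ j, j < 2*B+1 → (e j).val = if j < B then j + (q - B) else j - B := by
    intro j hj
    rw [he]
    simp only [ZMod.val_natCast]
    split_ifs with h
    · exact Nat.mod_eq_of_lt (by omega)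
    · have h1 : j + (q - B) = (j - B) + q := by omega
      rw [h1, Nat.add_mod_right, Nat.mod_eq_of_lt (by omega)]
  have hmemS : ∀ j, j < 2*B+1 → ((e j).val ≤ B ∨ q - B ≤ (e j).val) := by
    intro j hj
    rw [hval j hj]
    split_ifs with h
    · right; omega
    · left; omega
  have hinj : ∀ j ∈ Finset.range (2*B+1), ∀ k ∈ Finset.range (2*B+1), e j = e k → j = k := by
    intro j hj k hk hjk
    rw [Finset.mem_range] at hj hk
    have := congrArg ZMod.val hjk
    rw [hval j hj, hval k hk] at this
    split_ifs at this <;> omega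
  have hsurj : ∀ x : ZMod q, (x.val ≤ B ∨ q - B ≤ x.val) →
      x ∈ (Finset.range (2*B+1)).image e := by
    intro x hx
    have hxval : x.val < q := ZMod.val_lt x
    have hxcast : ((x.val : ℕ) : ZMod q) = x := by
      rw [ZMod.natCast_val, ZMod.cast_id]
    rw [Finset.mem_image]
    rcases hx with hx | hx
    · refine ⟨x.val + B, Finset.mem_range.mpr (by omega), ?_⟩
      rw [he]
      have h1 : x.val + B + (q - B) = x.val + q := by omega
      simp only [h1]
      push_cast
      rw [ZMod.natCast_self]
      simp only [add_zero]
      exact hxcast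
    · refine ⟨x.val - (q - B), Finset.mem_range.mpr (by omega), ?_⟩
      rw [he]
      have h1 : x.val - (q - B) + (q - B) = x.val := by omega
      simp only [h1]
      exact hxcast
  -- rewrite the sum
  have hsum : (∑ x : ZMod q,
      Complex.exp (2 * Real.pi * Complex.I * ((x.val:ℕ) * (y.val:ℕ)) / q) * (f x : ℂ))
      = ∑ j ∈ Finset.range (2*B+1), ω ^ (e j).val * ((1 / Real.sqrt (2*B+1) : ℝ) : ℂ) := by
    calc ∑ x : ZMod q, Complex.exp (2 * Real.pi * Complex.I * ((x.val:ℕ) * (y.val:ℕ)) / q) * (f x : ℂ)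
        = ∑ x ∈ (Finset.range (2*B+1)).image e,
            Complex.exp (2 * Real.pi * Complex.I * ((x.val:ℕ) * (y.val:ℕ)) / q) * (f x : ℂ) := by
          refine (Finset.sum_subset (Finset.subset_univ _) ?_).symm
          intro x _ hx
          rw [hf, if_neg, Complex.ofReal_zero, mul_zero]
          intro hc
          exact hx (hsurj x hc)
      _ = ∑ j ∈ Finset.range (2*B+1),
            Complex.exp (2 * Real.pi * Complex.I * (((e j).val:ℕ) * (y.val:ℕ)) / q) * (f (e j) : ℂ) :=
          Finset.sum_image hinj
      _ = ∑ j ∈ Finset.range (2*B+1), ω ^ (e j).val * ((1 / Real.sqrt (2*B+1) : ℝ) : ℂ) := by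
          apply Finset.sum_congr rfl
          intro j hj
          rw [Finset.mem_range] at hj
          rw [hterm, hf, if_pos (hmemS j hj)]
  set T : ℂ := ∑ j ∈ Finset.range (2*B+1), ω ^ j with hTdef
  have hpow : (∑ j ∈ Finset.range (2*B+1), ω ^ (e j).val) * ω ^ B = T := by
    rw [hTdef, Finset.sum_mul]
    apply Finset.sum_congr rfl
    intro j hj
    rw [Finset.mem_range] at hj
    rw [hval j hj]
    split_ifs with h
    · rw [← pow_add]
      have h2 : j + (q - B) + B = j + q := by omega
      rw [h2, pow_add, hωq, mul_one]
    · rw [← pow_add]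
      congr 1
      omega
  have hTabs : 1/(q:ℝ) ≤ ‖T‖ := by
    by_cases hy : y = 0
    · have hy0 : y.val = 0 := by rw [hy, ZMod.val_zero]
      have hω1 : ω = 1 := by rw [hω, hy0]; push_cast; simp
      have hT1 : T = ((2*B+1 : ℕ) : ℂ) := by
        rw [hTdef]
        simp [hω1]
      rw [hT1, Complex.norm_natCast]
      have h1 : 1/(q:ℝ) ≤ 1 := by
        rw [div_le_one hqR]; exact_mod_cast hqpos
      have h2 : (1:ℝ) ≤ ((2*B+1:ℕ):ℝ) := by exact_mod_cast Nat.succ_le_of_lt (by omega)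
      linarith
    · have hyval : 0 < y.val := by
        rcases Nat.eq_zero_or_pos y.val with h0|h; swap; · exact h
        exact absurd ((ZMod.val_eq_zero y).mp h0) hy
      set m := ((2*B+1) * y.val) % q with hm
      have hm0 : 0 < m := by
        rcases Nat.eq_zero_or_pos m with h0|h; swap; · exact h
        exfalso
        have hdvd : q ∣ (2*B+1) * y.val := Nat.dvd_of_mod_eq_zero h0
        have hcop : Nat.Coprime q (2*B+1) := Nat.Coprime.symm hgcd
        have hq2 : q ∣ y.val := hcop.dvd_of_dvd_mul_left hdvd
        have := Nat.le_of_dvd hyval hq2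
        have := ZMod.val_lt y
        omega
      have hmq : m < q := Nat.mod_lt _ hqpos
      have hω2B : ω ^ (2*B+1) = Complex.exp (((2*Real.pi*m/q : ℝ)) * Complex.I) := by
        rw [hω, hm]
        exact expow q (2*B+1) y.val hqpos
      have h1 := absexp_lb q m hm0 hmq
      rw [← hω2B] at h1
      have hω1 : ω ≠ 1 := by
        intro hc
        rw [hc, one_pow, sub_self, norm_zero] at h1
        have : (0:ℝ) < 2/q := by positivity
        linarith
      have hgeom : T = (ω^(2*B+1) - 1)/(ω - 1) := geom_sum_eq hω1 (2*B+1)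
      have hden : ‖ω - 1‖ ≤ 2 := by
        have h2 := norm_sub_le ω (1:ℂ)
        simp only [hωabs, norm_one] at h2
        linarith
      have hden0 : 0 < ‖ω - 1‖ := by
        rw [norm_pos_iff]
        exact sub_ne_zero.mpr hω1
      rw [hgeom, norm_div]
      calc 1/(q:ℝ) = (2/q)/2 := by ring
        _ ≤ ‖ω^(2*B+1) - 1‖ / ‖ω - 1‖ :=
            div_le_div₀ (norm_nonneg _) h1 hden0 hden
  have hsum2 : ∑ j ∈ Finset.range (2*B+1), ω ^ (e j).val = T / ω^B := by
    rw [eq_div_iff (pow_ne_zero B hω0)]; exact hpow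
  rw [hFhat y, hsum, ← Finset.sum_mul, hsum2]
  rw [norm_mul, norm_mul, norm_div, norm_pow, hωabs, one_pow, div_one]
  simp only [Complex.norm_real, Real.norm_eq_abs]
  have hs1 : 0 < Real.sqrt q := Real.sqrt_pos.mpr hqR
  have hs2 : 0 < Real.sqrt (2*(B:ℝ)+1) := Real.sqrt_pos.mpr (by positivity)
  have hsqrt : Real.sqrt ((q:ℝ)*(2*(B:ℝ)+1)) = Real.sqrt q * Real.sqrt (2*(B:ℝ)+1) :=
    Real.sqrt_mul (le_of_lt hqR) _
  rw [_root_.abs_of_nonneg (by positivity : (0:ℝ) ≤ 1/Real.sqrt q),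
    _root_.abs_of_nonneg (by positivity : (0:ℝ) ≤ 1/Real.sqrt (2*(B:ℝ)+1)), hsqrt]
  have heq : 1/((q:ℝ)*(Real.sqrt q*Real.sqrt (2*(B:ℝ)+1))) =
      1/Real.sqrt q * ((1/q) * (1/Real.sqrt (2*(B:ℝ)+1))) := by
    field_simp
  rw [heq]
  gcongr
end

section
/- Let q ≥ 2 and β with 1 ≤ 2β+1 ≤ q. Let f: ℤ_q → ℝ be the normalized indicator of [-β,β] (value 1/√(2β+1) on [-β,β]∩ℤ, 0 elsewhere), and for v ∈ ℤ_q let |ψ_v⟩ = QFT_q applied to Σ_x f(x)ω_q^{-xv}|x⟩. Then for every x ∈ ℤ_q, the average over uniform y ∈ ℤ_q of |⟨ψ_y|ψ_x⟩|² is at most 1/(2β+1); equivalently 1 − (1/q)·Σ_{y∈ℤ_q}|⟨ψ_y|ψ_x⟩|² ≥ 1 − 1/(2β+1). -/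
lemma sum_zmod_pow {q : ℕ} [NeZero q] (x : ℂ) :
    ∑ t : ZMod q, x ^ t.val = ∑ i ∈ Finset.range q, x ^ i := by
  obtain ⟨m, rfl⟩ := Nat.exists_eq_succ_of_ne_zero (NeZero.ne q)
  exact Fin.sum_univ_eq_sum_range _ _

lemma char_sum {q : ℕ} [NeZero q] {ω : ℂ} (hζ : IsPrimitiveRoot ω q) (k : ℤ) :
    ∑ t : ZMod q, ω ^ (k * (t.val : ℤ)) = if (q : ℤ) ∣ k then (q : ℂ) else 0 := by
  have h1 : ∀ t : ZMod q, ω ^ (k * (t.val : ℤ)) = (ω ^ k) ^ t.val := by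
    intro t; rw [← zpow_natCast (ω ^ k), ← zpow_mul]
  simp only [h1]
  rw [sum_zmod_pow]
  by_cases h : (q : ℤ) ∣ k
  · rw [if_pos h]
    have : ω ^ k = 1 := (hζ.zpow_eq_one_iff_dvd k).2 h
    simp [this]
  · rw [if_neg h]
    have hne : ω ^ k ≠ 1 := fun hc => h ((hζ.zpow_eq_one_iff_dvd k).1 hc)
    rw [geom_sum_eq hne]
    have : (ω ^ k) ^ q = 1 := by
      rw [← zpow_natCast (ω ^ k), ← zpow_mul, mul_comm, zpow_mul, zpow_natCast,
        hζ.pow_eq_one, one_zpow]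
    simp [this]

lemma dvd_iff_eq {q : ℕ} [NeZero q] (s s' : ZMod q) :
    (q : ℤ) ∣ ((s'.val : ℤ) - s.val) ↔ s' = s := by
  rw [← ZMod.intCast_zmod_eq_zero_iff_dvd]
  push_cast
  rw [ZMod.natCast_val, ZMod.natCast_val, ZMod.cast_id, ZMod.cast_id, sub_eq_zero]

lemma ortho_sum {q : ℕ} [NeZero q] {ω : ℂ} (hζ : IsPrimitiveRoot ω q) (hω0 : ω ≠ 0)
    (g h : ZMod q → ℂ) (c d : ZMod q → ℤ) :
    ∑ t : ZMod q, (∑ s : ZMod q, g s * ω ^ (c s - (s.val : ℤ) * t.val)) *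
        (∑ s : ZMod q, h s * ω ^ ((s.val : ℤ) * t.val - d s)) =
      (q : ℂ) * ∑ s : ZMod q, g s * h s * ω ^ (c s - d s) := by
  have step1 : ∀ t : ZMod q,
      (∑ s : ZMod q, g s * ω ^ (c s - (s.val : ℤ) * t.val)) *
        (∑ s : ZMod q, h s * ω ^ ((s.val : ℤ) * t.val - d s)) =
      ∑ s : ZMod q, ∑ s' : ZMod q,
        g s * h s' * ω ^ (c s - d s') * ω ^ (((s'.val : ℤ) - s.val) * t.val) := by
    intro t
    rw [Finset.sum_mul_sum]
    refine Finset.sum_congr rfl fun s _ => Finset.sum_congr rfl fun s' _ => ?_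
    rw [mul_assoc (g s * h s'), ← zpow_add₀ hω0, mul_assoc, mul_comm (ω ^ _) (h s' * _),
      mul_assoc, ← mul_assoc (g s)]
    congr 2
    rw [← zpow_add₀ hω0]
    congr 1
    ring
  simp only [step1]
  rw [Finset.sum_comm]
  rw [Finset.mul_sum]
  refine Finset.sum_congr rfl fun s _ => ?_
  rw [Finset.sum_comm]
  have : ∀ s' : ZMod q, ∑ t : ZMod q,
      g s * h s' * ω ^ (c s - d s') * ω ^ (((s'.val : ℤ) - s.val) * t.val) =
      g s * h s' * ω ^ (c s - d s') * (if s' = s then (q : ℂ) else 0) := by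
    intro s'
    rw [← Finset.mul_sum, char_sum hζ]
    simp only [dvd_iff_eq]
  simp only [this, mul_ite, mul_zero]
  rw [Finset.sum_ite_eq' Finset.univ s]
  simp [mul_comm]

lemma count_le (q β : ℕ) [NeZero q] (hβ : 2 * β + 1 ≤ q) :
    (Finset.univ.filter (fun s : ZMod q => s.val ≤ β ∨ q - β ≤ s.val)).card ≤ 2 * β + 1 := by
  have hsub : (Finset.univ.filter (fun s : ZMod q => s.val ≤ β ∨ q - β ≤ s.val)) ⊆
      (Finset.range (2 * β + 1)).image (fun j : ℕ => (j : ZMod q) - β) := by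
    intro s hs
    rw [Finset.mem_filter] at hs
    have hsv : s.val < q := ZMod.val_lt s
    have hcast : ((s.val : ℕ) : ZMod q) = s := by
      rw [ZMod.natCast_val, ZMod.cast_id]
    rcases hs.2 with h | h
    · refine Finset.mem_image.2 ⟨s.val + β, Finset.mem_range.2 (by omega), ?_⟩
      push_cast [hcast]
      ring
    · refine Finset.mem_image.2 ⟨s.val + β - q, Finset.mem_range.2 (by omega), ?_⟩
      have hqz : ((q : ℕ) : ZMod q) = 0 := ZMod.natCast_self q
      have heq : (s.val + β - q) + q = s.val + β := by omega
      have : (((s.val + β - q) + q : ℕ) : ZMod q) = ((s.val + β : ℕ) : ZMod q) := by rw [heq]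
      push_cast [hqz, hcast] at this
      rw [add_zero] at this; rw [this]; ring
  calc _ ≤ ((Finset.range (2 * β + 1)).image (fun j : ℕ => (j : ZMod q) - β)).card :=
        Finset.card_le_card hsub
    _ ≤ (Finset.range (2 * β + 1)).card := Finset.card_image_le
    _ = 2 * β + 1 := Finset.card_range _

theorem stmt10 (q β : ℕ) [NeZero q] (hq : 2 ≤ q) (hβ : 2 * β + 1 ≤ q)
    (f : ZMod q → ℂ)
    (hf : ∀ x : ZMod q,
      f x = if x.val ≤ β ∨ q - β ≤ x.val then ((1 / Real.sqrt (2 * β + 1) : ℝ) : ℂ) else 0)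
    (ω : ℂ) (hω : ω = Complex.exp (2 * Real.pi * Complex.I / q))
    (ψ : ZMod q → ZMod q → ℂ)
    (hψ : ∀ v t : ZMod q, ψ v t = (1 / Real.sqrt q : ℝ) *
      ∑ s : ZMod q, ω ^ (s.val * t.val) * (f s * ω ^ (-(s.val * v.val : ℤ)))) :
    ∀ x : ZMod q,
      (1 / (q : ℝ)) * ∑ y : ZMod q,
          ‖∑ t : ZMod q, star (ψ y t) * ψ x t‖ ^ 2 ≤ 1 / (2 * β + 1) := by
  intro x
  have hqR : (0 : ℝ) < q := by positivity
  have hqRne : (q : ℝ) ≠ 0 := ne_of_gt hqR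
  have hqC : (q : ℂ) ≠ 0 := by exact_mod_cast (Nat.cast_ne_zero (R := ℂ)).2 (NeZero.ne q)
  have hζ : IsPrimitiveRoot ω q := hω ▸ Complex.isPrimitiveRoot_exp q (NeZero.ne q)
  have hω0 : ω ≠ 0 := by
    rw [hω]; exact Complex.exp_ne_zero _
  have habs : ‖ω‖ = 1 := by
    rw [hω]
    have : 2 * (Real.pi : ℂ) * Complex.I / q = ((2 * Real.pi / q : ℝ) : ℂ) * Complex.I := by
      push_cast; ring
    rw [this, Complex.norm_exp_ofReal_mul_I]
  have hinv : (starRingEnd ℂ) ω = ω⁻¹ := by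
    rw [← Complex.norm_mul_exp_arg_mul_I ω, habs]
    simp [← Complex.exp_conj, ← Complex.exp_neg]
  have hconj : ∀ m : ℤ, (starRingEnd ℂ) (ω ^ m) = ω ^ (-m) := by
    intro m; rw [map_zpow₀, hinv, inv_zpow, ← zpow_neg]
  set r : ZMod q → ℝ := fun s =>
    if s.val ≤ β ∨ q - β ≤ s.val then 1 / Real.sqrt (2 * β + 1) else 0 with hr
  have hfr : ∀ s, f s = ((r s : ℝ) : ℂ) := by
    intro s
    rw [hf s]
    simp only [hr]
    by_cases h : s.val ≤ β ∨ q - β ≤ s.val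
    · rw [if_pos h, if_pos h]
    · rw [if_neg h, if_neg h, Complex.ofReal_zero]
  have hfreal : ∀ s, (starRingEnd ℂ) (f s) = f s := by
    intro s; rw [hfr s, Complex.conj_ofReal]
  -- ψ in zpow form
  have hψ2 : ∀ v t : ZMod q, ψ v t = ((1 / Real.sqrt q : ℝ) : ℂ) *
      ∑ s : ZMod q, f s * ω ^ ((s.val : ℤ) * t.val - (s.val : ℤ) * v.val) := by
    intro v t
    rw [hψ]
    congr 1
    refine Finset.sum_congr rfl fun s _ => ?_
    calc ω ^ (s.val * t.val) * (f s * ω ^ (-(s.val * v.val : ℤ)))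
        = f s * (ω ^ ((s.val * t.val : ℕ) : ℤ) * ω ^ (-(s.val * v.val : ℤ))) := by
          rw [zpow_natCast]; ring
      _ = f s * ω ^ ((s.val : ℤ) * t.val - (s.val : ℤ) * v.val) := by
          rw [← zpow_add₀ hω0]
          congr 1

  have hstar : ∀ v t : ZMod q, star (ψ v t) = ((1 / Real.sqrt q : ℝ) : ℂ) *
      ∑ s : ZMod q, f s * ω ^ ((s.val : ℤ) * v.val - (s.val : ℤ) * t.val) := by
    intro v t
    have : star (ψ v t) = (starRingEnd ℂ) (ψ v t) := rfl
    rw [this, hψ2, map_mul, Complex.conj_ofReal, map_sum]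
    congr 1
    refine Finset.sum_congr rfl fun s _ => ?_
    rw [map_mul, hfreal, hconj, neg_sub]
  -- inner product
  have hT : ∀ y : ZMod q, ∑ t : ZMod q, star (ψ y t) * ψ x t =
      ∑ s : ZMod q, f s ^ 2 * ω ^ ((s.val : ℤ) * y.val - (s.val : ℤ) * x.val) := by
    intro y
    have expand : ∀ t : ZMod q, star (ψ y t) * ψ x t =
        (((1 / Real.sqrt q : ℝ) : ℂ) * ((1 / Real.sqrt q : ℝ) : ℂ)) *
          ((∑ s : ZMod q, f s * ω ^ ((s.val : ℤ) * y.val - (s.val : ℤ) * t.val)) *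
           (∑ s : ZMod q, f s * ω ^ ((s.val : ℤ) * t.val - (s.val : ℤ) * x.val))) := by
      intro t; rw [hstar, hψ2]; ring
    simp only [expand]
    rw [← Finset.mul_sum,
      ortho_sum hζ hω0 f f (fun s => (s.val : ℤ) * y.val) (fun s => (s.val : ℤ) * x.val)]
    have hc : (((1 / Real.sqrt q : ℝ) : ℂ) * ((1 / Real.sqrt q : ℝ) : ℂ)) * (q : ℂ) = 1 := by
      have : (1 / Real.sqrt q : ℝ) * (1 / Real.sqrt q : ℝ) = 1 / q := by
        rw [div_mul_div_comm, one_mul, Real.mul_self_sqrt (le_of_lt hqR)]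
      rw [← Complex.ofReal_mul, this, Complex.ofReal_div, Complex.ofReal_one,
        Complex.ofReal_natCast]
      field_simp
    rw [← mul_assoc, hc, one_mul]
    refine Finset.sum_congr rfl fun s _ => ?_
    ring
  -- second moment
  have hconjT : ∀ y : ZMod q,
      (starRingEnd ℂ) (∑ s : ZMod q, f s ^ 2 * ω ^ ((s.val : ℤ) * y.val - (s.val : ℤ) * x.val)) =
      ∑ s : ZMod q, f s ^ 2 * ω ^ ((s.val : ℤ) * x.val - (s.val : ℤ) * y.val) := by
    intro y
    rw [map_sum]
    refine Finset.sum_congr rfl fun s _ => ?_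
    rw [map_mul, map_pow, hfreal, hconj, neg_sub]
  have hsum2 : ∑ y : ZMod q,
      (starRingEnd ℂ) (∑ s : ZMod q, f s ^ 2 * ω ^ ((s.val : ℤ) * y.val - (s.val : ℤ) * x.val)) *
      (∑ s : ZMod q, f s ^ 2 * ω ^ ((s.val : ℤ) * y.val - (s.val : ℤ) * x.val)) =
      (q : ℂ) * ∑ s : ZMod q, f s ^ 2 * f s ^ 2 * ω ^ (0 : ℤ) := by
    simp only [hconjT]
    have := ortho_sum hζ hω0 (fun s => f s ^ 2) (fun s => f s ^ 2)
      (fun s => (s.val : ℤ) * x.val) (fun s => (s.val : ℤ) * x.val)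
    rw [this]
    simp
  have habs2 : ∀ z : ℂ, ‖z‖ ^ 2 = ((starRingEnd ℂ) z * z).re := by
    intro z
    rw [Complex.sq_norm, ← Complex.normSq_eq_conj_mul_self, Complex.ofReal_re]
  -- put it together
  have key : ∑ y : ZMod q, ‖∑ t : ZMod q, star (ψ y t) * ψ x t‖ ^ 2 =
      (q : ℝ) * ∑ s : ZMod q, r s ^ 4 := by
    have : ∀ y : ZMod q, ‖∑ t : ZMod q, star (ψ y t) * ψ x t‖ ^ 2 =
        ((starRingEnd ℂ)
            (∑ s : ZMod q, f s ^ 2 * ω ^ ((s.val : ℤ) * y.val - (s.val : ℤ) * x.val)) *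
          (∑ s : ZMod q, f s ^ 2 * ω ^ ((s.val : ℤ) * y.val - (s.val : ℤ) * x.val))).re := by
      intro y; rw [hT y, habs2]
    simp only [this]
    rw [← Complex.re_sum, hsum2]
    have : (q : ℂ) * ∑ s : ZMod q, f s ^ 2 * f s ^ 2 * ω ^ (0 : ℤ) =
        (((q : ℝ) * ∑ s : ZMod q, r s ^ 4 : ℝ) : ℂ) := by
      simp only [zpow_zero, mul_one, hfr]
      push_cast
      refine congrArg _ (Finset.sum_congr rfl fun s _ => by ring)
    rw [this, Complex.ofReal_re]
  rw [key, ← mul_assoc, one_div, inv_mul_cancel₀ hqRne, one_mul]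
  -- evaluate the sum of fourth powers
  have hX : (0 : ℝ) < 2 * (β : ℝ) + 1 := by positivity
  have hr4 : ∀ s : ZMod q, r s ^ 4 =
      if s.val ≤ β ∨ q - β ≤ s.val then (1 / (2 * (β : ℝ) + 1)) ^ 2 else 0 := by
    intro s
    simp only [hr]
    by_cases h : s.val ≤ β ∨ q - β ≤ s.val
    · rw [if_pos h, if_pos h]
      have hs : Real.sqrt (2 * β + 1) ^ 2 = 2 * (β : ℝ) + 1 := by
        rw [Real.sq_sqrt (by positivity)]
      have h4 : (1 / Real.sqrt (2 * β + 1)) ^ 4 = ((1 / Real.sqrt (2 * β + 1)) ^ 2) ^ 2 := by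
        ring
      rw [h4, div_pow, one_pow, hs]
    · rw [if_neg h, if_neg h]
      norm_num
  simp only [hr4]
  rw [← Finset.sum_filter, Finset.sum_const, nsmul_eq_mul]
  have hN : ((Finset.univ.filter (fun s : ZMod q => s.val ≤ β ∨ q - β ≤ s.val)).card : ℝ) ≤
      2 * (β : ℝ) + 1 := by
    have := count_le q β hβ
    exact_mod_cast this
  calc ((Finset.univ.filter (fun s : ZMod q => s.val ≤ β ∨ q - β ≤ s.val)).card : ℝ) *
        (1 / (2 * (β : ℝ) + 1)) ^ 2
      ≤ (2 * (β : ℝ) + 1) * (1 / (2 * (β : ℝ) + 1)) ^ 2 := by gcongr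
    _ = 1 / (2 * (β : ℝ) + 1) := by field_simp
end

section
/- Let q ≥ 2 be an integer, B an integer with 0 < 2B+1 < q, and y ∈ ℤ_q. Define the q×q complex matrix W whose j-th column (j = 0,...,q-1) is the vector |ψ_{y+j}⟩ = Σ_{e∈ℤ_q} ĝ(e)|y+j+e mod q⟩, where g is the normalized indicator of [-B,B] on ℤ_q and ĝ its DFT. Then the rank of W equals 2B+1. -/
theorem stmt11 (q B : ℕ) [NeZero q] (hq : 2 ≤ q) (hB : 2 * B + 1 < q) (y : ZMod q)
    (g : ZMod q → ℂ)
    (hg : ∀ x : ZMod q,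
      g x = if x.val ≤ B ∨ q - B ≤ x.val then ((1 / Real.sqrt (2 * B + 1) : ℝ) : ℂ) else 0)
    (ghat : ZMod q → ℂ)
    (hghat : ∀ e : ZMod q, ghat e = (1 / Real.sqrt q : ℝ) *
      ∑ x : ZMod q, Complex.exp (2 * Real.pi * Complex.I * (e.val * x.val) / q) * g x)
    (W : Matrix (ZMod q) (ZMod q) ℂ)
    (hW : ∀ t j : ZMod q, W t j = ghat (t - (y + j))) :
    W.rank = 2 * B + 1 := by
  classical
  have hq0 : q ≠ 0 := by omega
  set ζ : ℂ := Complex.exp (2 * Real.pi * Complex.I / q) with hζ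
  have hprim : IsPrimitiveRoot ζ q := Complex.isPrimitiveRoot_exp q hq0
  have hζq : ζ ^ q = 1 := hprim.pow_eq_one
  have hmod : ∀ m : ℕ, ζ ^ (m % q) = ζ ^ m := by
    intro m
    conv_rhs => rw [← Nat.div_add_mod m q]
    rw [pow_add, pow_mul, hζq, one_pow, one_mul]
  set ψ : ZMod q → ℂ := fun a => ζ ^ a.val with hψ
  have hψadd : ∀ a b : ZMod q, ψ (a + b) = ψ a * ψ b := by
    intro a b
    simp only [hψ]
    rw [ZMod.val_add, hmod, pow_add]
  have hψmul : ∀ a b : ZMod q, ψ (a * b) = ζ ^ (a.val * b.val) := by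
    intro a b
    simp only [hψ]
    rw [ZMod.val_mul, hmod]
  have hψne : ∀ a, ψ a ≠ 0 := fun a => pow_ne_zero _ (Complex.exp_ne_zero _)
  set c : ℂ := ((1 / Real.sqrt q : ℝ) : ℂ) with hcdef
  have hqpos : (0 : ℝ) < q := by exact_mod_cast Nat.pos_of_ne_zero hq0
  have hc : c ≠ 0 := by
    simp only [hcdef, ne_eq, Complex.ofReal_eq_zero, one_div, inv_eq_zero]
    exact ne_of_gt (Real.sqrt_pos.mpr hqpos)
  set d : ZMod q → ℂ := fun x => c * ψ (-(y * x)) * g x with hd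
  set F : Matrix (ZMod q) (ZMod q) ℂ := Matrix.of (fun t x => ψ (t * x)) with hF
  set G : Matrix (ZMod q) (ZMod q) ℂ := Matrix.of (fun x j => ψ (-(x * j))) with hG
  have hexp : ∀ a x : ZMod q,
      Complex.exp (2 * Real.pi * Complex.I * (a.val * x.val) / q) = ψ (a * x) := by
    intro a x
    rw [hψmul, hζ, ← Complex.exp_nat_mul]
    congr 1
    push_cast
    ring
  have hWfact : W = F * Matrix.diagonal d * G := by
    ext t j
    rw [Matrix.mul_apply]
    simp only [Matrix.mul_diagonal]
    rw [hW, hghat]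
    rw [Finset.mul_sum]
    apply Finset.sum_congr rfl
    intro x _
    rw [hexp]
    have hsplit : (t - (y + j)) * x = t * x + -(y * x) + -(x * j) := by ring
    rw [hsplit, hψadd, hψadd]
    simp only [hF, hG, hd, Matrix.of_apply]
    ring
  have hval : ∀ i : Fin q, ((i : ℕ) : ZMod q).val = i := fun i => ZMod.val_cast_of_lt i.isLt
  let e : Fin q ≃ ZMod q :=
    { toFun := fun i => ((i : ℕ) : ZMod q)
      invFun := fun x => ⟨x.val, x.val_lt⟩
      left_inv := fun i => by ext; simp [hval]
      right_inv := fun x => ZMod.natCast_rightInverse x }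
  have hFdet : IsUnit F.det := by
    rw [← Matrix.det_submatrix_equiv_self e F]
    have hsub : F.submatrix e e = Matrix.vandermonde (fun i : Fin q => ζ ^ (i : ℕ)) := by
      ext i j
      simp only [Matrix.submatrix_apply, hF, Matrix.of_apply, Matrix.vandermonde]
      rw [hψmul]
      simp only [e, Equiv.coe_fn_mk, hval]
      rw [← pow_mul]
    rw [hsub, isUnit_iff_ne_zero, Matrix.det_vandermonde_ne_zero_iff]
    intro i j hij
    exact Fin.ext (hprim.pow_inj i.isLt j.isLt hij)
  have hGdet : IsUnit G.det := by
    have hGF : G = F.submatrix (⇑(Equiv.neg (ZMod q))) id := by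
      ext i j
      simp only [hG, hF, Matrix.of_apply, Matrix.submatrix_apply, Equiv.neg_apply, id_eq]
      congr 1
      ring
    rw [hGF, Matrix.det_permute]
    exact (IsUnit.map (Int.castRingHom ℂ) (Int.isUnit_iff.mpr
      (Int.units_eq_one_or (Equiv.Perm.sign (Equiv.neg (ZMod q))) |>.elim
        (fun h => by rw [h]; norm_num) (fun h => by rw [h]; norm_num)))).mul hFdet
  rw [hWfact,
    Matrix.rank_mul_eq_left_of_isUnit_det G (F * Matrix.diagonal d) hGdet,
    Matrix.rank_mul_eq_right_of_isUnit_det F (Matrix.diagonal d) hFdet,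
    Matrix.rank_diagonal]
  have hdne : ∀ x : ZMod q, d x ≠ 0 ↔ (x.val ≤ B ∨ q - B ≤ x.val) := by
    intro x
    by_cases hcond : x.val ≤ B ∨ q - B ≤ x.val
    · have hBpos : (0 : ℝ) < (2 * B + 1 : ℕ) := by positivity
      have : g x ≠ 0 := by
        rw [hg x, if_pos hcond]
        simp only [ne_eq, Complex.ofReal_eq_zero, one_div, inv_eq_zero]
        push_cast
        exact ne_of_gt (Real.sqrt_pos.mpr (by push_cast at hBpos ⊢; linarith))
      simp only [hd, hcond, iff_true]
      exact mul_ne_zero (mul_ne_zero hc (hψne _)) this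
    · simp only [hd, hcond, iff_false, ne_eq, not_not]
      rw [hg x, if_neg hcond, mul_zero]
  rw [Fintype.card_subtype]
  rw [Finset.filter_congr (fun x _ => by rw [hdne x])]
  rw [← Finset.card_image_of_injective _ (ZMod.val_injective q)]
  have himg : (Finset.univ.filter (fun x : ZMod q => x.val ≤ B ∨ q - B ≤ x.val)).image ZMod.val
      = (Finset.range q).filter (fun n => n ≤ B ∨ q - B ≤ n) := by
    ext n
    simp only [Finset.mem_image, Finset.mem_filter, Finset.mem_range, Finset.mem_univ, true_and]
    constructor
    · rintro ⟨x, hx, rfl⟩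
      exact ⟨x.val_lt, hx⟩
    · rintro ⟨hn, hp⟩
      exact ⟨(n : ZMod q), by rw [ZMod.val_cast_of_lt hn]; exact hp, ZMod.val_cast_of_lt hn⟩
  rw [himg]
  have hsplit : (Finset.range q).filter (fun n => n ≤ B ∨ q - B ≤ n)
      = Finset.range (B + 1) ∪ Finset.Ico (q - B) q := by
    ext n
    simp only [Finset.mem_filter, Finset.mem_range, Finset.mem_union, Finset.mem_Ico]
    omega
  rw [hsplit, Finset.card_union_of_disjoint, Finset.card_range, Nat.card_Ico]
  · omega
  · rw [Finset.disjoint_left]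
    intro n h1 h2
    simp only [Finset.mem_range, Finset.mem_Ico] at h1 h2
    omega
end

section
/- Let q ≥ 2 be an integer, B with 0 < 2B+1 < q, and let W^T = (|ψ_{y}⟩, ..., |ψ_{y+q-1}⟩) be the circulant matrix of shifted states with amplitude ĝ (the DFT of the normalized indicator of [-B,B]). Then the length of the (2B+1)-st Gram-Schmidt vector of the first 2B+1 columns satisfies ‖ψ̃_{y+2B}‖₂ ≥ q/((2B+1)^{3/2}·2^{q-2B-1}). -/
set_option linter.unusedSectionVars false

open Finset Complex Polynomial InnerProductSpace

variable (q : ℕ) [NeZero q]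

noncomputable def om : ℂ := Complex.exp (2 * Real.pi * Complex.I / q)

lemma om_prim : IsPrimitiveRoot (om q) q :=
  Complex.isPrimitiveRoot_exp q (NeZero.ne q)

noncomputable def chi (m : ZMod q) : ℂ := om q ^ m.val

lemma chi_natCast (m : ℕ) : chi q (m : ZMod q) = om q ^ m := by
  have h : m = q * (m / q) + m % q := (Nat.div_add_mod m q).symm
  conv_rhs => rw [h]
  rw [pow_add, pow_mul, (om_prim q).pow_eq_one, one_pow, one_mul]
  simp [chi, ZMod.val_natCast]

lemma chi_zero : chi q 0 = 1 := by
  have := chi_natCast q 0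
  simpa using this

lemma chi_add (a b : ZMod q) : chi q (a + b) = chi q a * chi q b := by
  have h1 : a + b = ((a.val + b.val : ℕ) : ZMod q) := by
    push_cast [ZMod.natCast_val, ZMod.cast_id]; ring
  rw [h1, chi_natCast, pow_add]; rfl

lemma chi_abs (m : ZMod q) : ‖chi q m‖ = 1 := by
  have h : ‖om q‖ = 1 := by
    simp only [om, Complex.norm_exp]
    have : (2 * Real.pi * Complex.I / q).re = 0 := by
      simp [Complex.div_re]
    rw [this, Real.exp_zero]
  simp [chi, map_pow, h]

lemma chi_ne_zero (m : ZMod q) : chi q m ≠ 0 := by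
  intro h
  have := chi_abs q m
  rw [h] at this
  simp at this

lemma chi_conj (m : ZMod q) : (starRingEnd ℂ) (chi q m) = chi q (-m) := by
  have h1 : chi q m * chi q (-m) = 1 := by
    rw [← chi_add]; simp [chi_zero]
  have h2 : (starRingEnd ℂ) (chi q m) * chi q m = 1 := by
    rw [mul_comm, Complex.mul_conj]
    norm_cast
    rw [← Complex.sq_norm, chi_abs]; norm_num
  have h1' : chi q (-m) * chi q m = 1 := by rw [mul_comm]; exact h1
  exact mul_right_cancel₀ (chi_ne_zero q m) (h2.trans h1'.symm)

lemma chi_nat_mul (n : ℕ) (m : ZMod q) : chi q ((n : ZMod q) * m) = chi q m ^ n := by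
  induction n with
  | zero => simp [chi_zero]
  | succ n ih =>
      have : ((n+1 : ℕ) : ZMod q) * m = (n : ZMod q) * m + m := by push_cast; ring
      rw [this, chi_add, ih, pow_succ]

lemma chi_ne_one {c : ZMod q} (hc : c ≠ 0) : chi q c ≠ 1 := by
  intro h
  have h0 : om q ^ c.val = om q ^ 0 := by simpa [chi] using h
  have := (om_prim q).pow_inj (ZMod.val_lt c) (Nat.pos_of_ne_zero (NeZero.ne q)) h0
  exact hc (by rwa [ZMod.val_eq_zero] at this)

lemma sum_val_range (f : ℕ → ℂ) :
    ∑ t : ZMod q, f t.val = ∑ i ∈ range q, f i := by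
  refine Finset.sum_nbij' (fun t => t.val) (fun i => (i : ZMod q)) ?_ ?_ ?_ ?_ ?_
  · intro t _; exact mem_range.2 (ZMod.val_lt t)
  · intro i _; exact mem_univ _
  · intro t _; simp [ZMod.natCast_val, ZMod.cast_id]
  · intro i hi; simp [ZMod.val_natCast, Nat.mod_eq_of_lt (mem_range.1 hi)]
  · intro t _; rfl

lemma chi_orth (c : ZMod q) :
    ∑ t : ZMod q, chi q (t * c) = if c = 0 then (q : ℂ) else 0 := by
  have key : ∀ t : ZMod q, chi q (t * c) = chi q c ^ t.val := by
    intro t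
    have : t * c = (t.val : ZMod q) * c := by
      simp [ZMod.natCast_val, ZMod.cast_id]
    rw [this, chi_nat_mul]
  simp_rw [key]
  rw [sum_val_range q (fun i => chi q c ^ i)]
  by_cases hc : c = 0
  · simp [hc, chi_zero]
  · rw [if_neg hc]
    have h1 : chi q c ≠ 1 := chi_ne_one q hc
    rw [geom_sum_eq h1]
    have : chi q c ^ q = 1 := by
      simp only [chi]
      rw [← pow_mul, mul_comm, pow_mul, (om_prim q).pow_eq_one, one_pow]
    rw [this]
    simp

lemma prod_X_sub_om : ∏ i ∈ range q, (X - C (om q ^ i)) = X ^ q - 1 := by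
  have hq : 0 < q := Nat.pos_of_ne_zero (NeZero.ne q)
  have h := Polynomial.X_pow_sub_one_eq_prod hq (om_prim q)
  have himg : Polynomial.nthRootsFinset q (1 : ℂ) = (range q).image (om q ^ ·) := by
    rw [Polynomial.nthRootsFinset, IsPrimitiveRoot.nthRoots_eq (om_prim q) (one_pow q)]
    rw [Multiset.toFinset_map]
    have hr : (Multiset.range q).toFinset = range q := by ext i; simp
    simp [Finset.image_image, hr]
  rw [himg, Finset.prod_image] at h
  · exact h.symm
  · intro a ha b hb hab
    exact (om_prim q).pow_inj (mem_range.1 ha) (mem_range.1 hb) hab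

lemma prod_one_sub_om : ∏ i ∈ (range q).erase 0, (1 - om q ^ i) = (q : ℂ) := by
  have hq : 0 < q := Nat.pos_of_ne_zero (NeZero.ne q)
  have h0 : (0 : ℕ) ∈ range q := mem_range.2 hq
  have key : (X - 1) * ∏ i ∈ (range q).erase 0, (X - C (om q ^ i))
      = (X - 1) * ∑ i ∈ range q, (X : ℂ[X]) ^ i := by
    have hg : ((X:ℂ[X]) - 1) * ∑ i ∈ range q, (X : ℂ[X]) ^ i = X ^ q - 1 := by
      rw [mul_comm]; exact geom_sum_mul X q
    rw [hg, ← prod_X_sub_om q, ← Finset.mul_prod_erase (range q)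
      (fun i => (X : ℂ[X]) - C (om q ^ i)) h0]
    simp
  have hX1 : ((X : ℂ[X]) - 1) ≠ 0 := by
    have := Polynomial.X_sub_C_ne_zero (1 : ℂ)
    simpa using this
  have key2 := mul_left_cancel₀ hX1 key
  have := congrArg (Polynomial.eval (1 : ℂ)) key2
  simp only [eval_prod, eval_finset_sum, eval_sub, eval_X, eval_C, eval_one, eval_pow,
    one_pow] at this
  simpa using this


lemma abs_prod_full (a : ZMod q) :
    ‖∏ m ∈ Finset.univ.erase a, (chi q a - chi q m)‖ = q := by
  -- reindex m = a + t over t ∈ univ.erase 0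
  have step1 : ∏ m ∈ Finset.univ.erase a, (chi q a - chi q m)
      = ∏ t ∈ Finset.univ.erase 0, (chi q a - chi q (a + t)) := by
    refine Finset.prod_nbij' (fun m => m - a) (fun t => a + t) ?_ ?_ ?_ ?_ ?_
    · intro m hm
      simp only [Finset.mem_erase, Finset.mem_univ, and_true] at hm ⊢
      intro h; apply hm; rwa [sub_eq_zero] at h
    · intro t ht
      simp only [Finset.mem_erase, Finset.mem_univ, and_true] at ht ⊢
      intro h; apply ht; rwa [add_eq_left] at h
    · intro m _; ring
    · intro t _; ring
    · intro m _; ring_nf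
  have step2 : ∀ t : ZMod q, chi q a - chi q (a + t) = chi q a * (1 - chi q t) := by
    intro t; rw [chi_add]; ring
  rw [step1]
  simp_rw [step2]
  rw [Finset.prod_mul_distrib, norm_mul, norm_prod, norm_prod]
  have h1 : ∏ i ∈ Finset.univ.erase (0 : ZMod q), ‖chi q a‖ = 1 := by
    simp [chi_abs]
  rw [h1, one_mul, ← norm_prod]
  have step3 : ∏ t ∈ Finset.univ.erase (0 : ZMod q), (1 - chi q t)
      = ∏ i ∈ (Finset.range q).erase 0, (1 - om q ^ i) := by
    refine Finset.prod_nbij' (fun t => t.val) (fun i => (i : ZMod q)) ?_ ?_ ?_ ?_ ?_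
    · intro t ht
      simp only [Finset.mem_erase, Finset.mem_univ, and_true] at ht
      simp only [Finset.mem_erase, Finset.mem_range]
      exact ⟨fun h => ht (by rwa [← ZMod.val_eq_zero]), ZMod.val_lt t⟩
    · intro i hi
      simp only [Finset.mem_erase, Finset.mem_range] at hi
      simp only [Finset.mem_erase, Finset.mem_univ, and_true]
      intro h
      have : (i : ZMod q).val = 0 := by rw [h]; exact ZMod.val_zero
      rw [ZMod.val_natCast, Nat.mod_eq_of_lt hi.2] at this
      exact hi.1 this
    · intro t _; simp [ZMod.natCast_val, ZMod.cast_id]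
    · intro i hi
      simp only [Finset.mem_erase, Finset.mem_range] at hi
      simp [ZMod.val_natCast, Nat.mod_eq_of_lt hi.2]
    · intro t _; simp [chi]
  rw [step3, prod_one_sub_om]
  simp

lemma exp_chi (a c : ZMod q) :
    Complex.exp (2 * Real.pi * Complex.I * (a.val * c.val) / q) = chi q (a * c) := by
  have h1 : (2 * Real.pi * Complex.I * (a.val * c.val) / q : ℂ)
      = ((a.val * c.val : ℕ) : ℂ) * (2 * Real.pi * Complex.I / q) := by
    push_cast; ring
  rw [h1, Complex.exp_nat_mul]
  have h2 : a * c = ((a.val * c.val : ℕ) : ZMod q) := by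
    push_cast [ZMod.natCast_val, ZMod.cast_id]; ring
  rw [h2, chi_natCast]
  rfl

lemma pairing (a c : ZMod q → ℂ) :
    ∑ t : ZMod q, (∑ x : ZMod q, a x * chi q (-(t * x))) * (∑ x' : ZMod q, c x' * chi q (t * x'))
      = q * ∑ x : ZMod q, a x * c x := by
  have expand : ∀ t : ZMod q,
      (∑ x : ZMod q, a x * chi q (-(t * x))) * (∑ x' : ZMod q, c x' * chi q (t * x'))
        = ∑ x : ZMod q, ∑ x' : ZMod q, a x * c x' * (chi q (-(t * x)) * chi q (t * x')) := by
    intro t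
    rw [Finset.sum_mul_sum]
    exact Finset.sum_congr rfl fun x _ => Finset.sum_congr rfl fun x' _ => by ring
  simp_rw [expand]
  rw [Finset.sum_comm]
  have swap2 : ∀ x : ZMod q,
      ∑ t : ZMod q, ∑ x' : ZMod q, a x * c x' * (chi q (-(t * x)) * chi q (t * x'))
        = ∑ x' : ZMod q, a x * c x' * ∑ t : ZMod q, chi q (-(t * x)) * chi q (t * x') := by
    intro x
    rw [Finset.sum_comm]
    exact Finset.sum_congr rfl fun x' _ => by rw [Finset.mul_sum]
  simp_rw [swap2]
  have horth : ∀ x x' : ZMod q,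
      ∑ t : ZMod q, chi q (-(t * x)) * chi q (t * x') = if x' = x then (q : ℂ) else 0 := by
    intro x x'
    have h1 : ∀ t : ZMod q, chi q (-(t * x)) * chi q (t * x') = chi q (t * (x' - x)) := by
      intro t; rw [← chi_add]; congr 1; ring
    simp_rw [h1, chi_orth]
    by_cases h : x' = x
    · rw [if_pos (by rw [h, sub_self]), if_pos h]
    · rw [if_neg (fun hh => h (sub_eq_zero.1 hh)), if_neg h]
  simp_rw [horth]
  rw [Finset.mul_sum]
  refine Finset.sum_congr rfl fun x _ => ?_
  rw [Finset.sum_eq_single_of_mem x (Finset.mem_univ x)]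
  · rw [if_pos rfl]; ring
  · intro x' _ hx'
    rw [if_neg hx', mul_zero]

section Helpers
open Finset Polynomial Submodule

lemma basis_coeff {F : Type*} [Field F] {ι : Type*} [DecidableEq ι] (s : Finset ι) (v : ι → F)
    (i : ι) (hi : i ∈ s) :
    (Lagrange.basis s v i).coeff (s.card - 1) = (∏ l ∈ s.erase i, (v i - v l))⁻¹ := by
  have hb : Lagrange.basis s v i
      = C (∏ l ∈ s.erase i, (v i - v l)⁻¹) * ∏ l ∈ s.erase i, (X - C (v l)) := by
    rw [Lagrange.basis]
    simp_rw [Lagrange.basisDivisor]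
    rw [Finset.prod_mul_distrib, map_prod]
  rw [hb, Polynomial.coeff_C_mul]
  have hmon : (∏ l ∈ s.erase i, (X - C (v l))).Monic :=
    monic_prod_of_monic _ _ (fun l _ => monic_X_sub_C (v l))
  have hdeg : (∏ l ∈ s.erase i, (X - C (v l))).natDegree = s.card - 1 := by
    rw [natDegree_prod_of_monic _ _ (fun l _ => monic_X_sub_C (v l))]
    simp [Finset.card_erase_of_mem hi]
  rw [← hdeg, hmon.coeff_natDegree, mul_one, ← Finset.prod_inv_distrib]

lemma lag_coeff {F : Type*} [Field F] {ι : Type*} [DecidableEq ι] (s : Finset ι) (v : ι → F)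
    (hv : Set.InjOn v s) (j : ℕ) (hj : j < s.card) :
    ∑ i ∈ s, v i ^ j * (∏ l ∈ s.erase i, (v i - v l))⁻¹
      = if j = s.card - 1 then 1 else 0 := by
  have hdeg : ((X : F[X]) ^ j).degree < s.card := by
    rw [degree_X_pow]
    exact_mod_cast hj
  have h1 : (X : F[X]) ^ j = Lagrange.interpolate s v (fun i => v i ^ j) := by
    refine Lagrange.eq_interpolate_of_eval_eq _ hv hdeg (fun i _ => ?_)
    simp
  have h2 := congrArg (fun p : F[X] => p.coeff (s.card - 1)) h1
  simp only [Lagrange.interpolate_apply, Polynomial.finset_sum_coeff,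
    Polynomial.coeff_C_mul, Polynomial.coeff_X_pow] at h2
  rw [Finset.sum_congr rfl (fun i hi => by rw [basis_coeff s v i hi])] at h2 <;> try skip
  rw [← h2]
  by_cases h : j = s.card - 1
  · rw [if_pos h, if_pos h.symm]
  · rw [if_neg h, if_neg (fun hh => h hh.symm)]

lemma inner_span_zero {E : Type*} [NormedAddCommGroup E] [InnerProductSpace ℂ E]
    (u : E) (s : Set E) (hu : ∀ v ∈ s, (inner ℂ u v : ℂ) = 0) :
    ∀ w ∈ span ℂ s, (inner ℂ u w : ℂ) = 0 := by
  intro w hw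
  induction hw using Submodule.span_induction with
  | mem x hx => exact hu x hx
  | zero => exact inner_zero_right u
  | add x y _ _ hx hy => rw [inner_add_right, hx, hy, add_zero]
  | smul c x _ hx => rw [inner_smul_right, hx, mul_zero]

lemma gs_inner_eq {ι : Type*} [LinearOrder ι] [LocallyFiniteOrderBot ι] [WellFoundedLT ι]
    {E : Type*} [NormedAddCommGroup E] [InnerProductSpace ℂ E]
    (f : ι → E) (n : ι) (u : E) (hu : ∀ j, j < n → (inner ℂ u (f j) : ℂ) = 0) :
    (inner ℂ u (gramSchmidt ℂ f n) : ℂ) = inner ℂ u (f n) := by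
  have hspan : ∀ w ∈ span ℂ (f '' Set.Iio n), (inner ℂ u w : ℂ) = 0 := by
    refine inner_span_zero u _ ?_
    rintro v ⟨j, hj, rfl⟩
    exact hu j hj
  have hmem : f n - gramSchmidt ℂ f n ∈ span ℂ (f '' Set.Iio n) := by
    rw [← span_gramSchmidt_Iio ℂ f n]
    rw [gramSchmidt_def ℂ f n, sub_sub_cancel]
    refine Submodule.sum_mem _ (fun i hi => ?_)
    have h1 : (ℂ ∙ gramSchmidt ℂ f i).starProjection (f n)
        ∈ (ℂ ∙ gramSchmidt ℂ f i) := by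
      rw [Submodule.starProjection_apply]; exact SetLike.coe_mem _
    refine Submodule.span_mono (s := {gramSchmidt ℂ f i}) ?_ h1
    intro x hx
    rcases Set.mem_singleton_iff.1 hx with rfl
    exact Set.mem_image_of_mem _ (Finset.mem_Iio.1 hi)
  have := hspan _ hmem
  rw [inner_sub_right] at this
  linear_combination -this

end Helpers

theorem stmt12 (q B : ℕ) [NeZero q] (hq : 2 ≤ q) (hB : 2 * B + 1 < q) (y : ZMod q)
    (g : ZMod q → ℂ)
    (hg : ∀ x : ZMod q,
      g x = if x.val ≤ B ∨ q - B ≤ x.val then ((1 / Real.sqrt (2 * B + 1) : ℝ) : ℂ) else 0)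
    (ghat : ZMod q → ℂ)
    (hghat : ∀ e : ZMod q, ghat e = (1 / Real.sqrt q : ℝ) *
      ∑ x : ZMod q, Complex.exp (2 * Real.pi * Complex.I * (e.val * x.val) / q) * g x)
    (b : Fin (2 * B + 1) → EuclideanSpace ℂ (ZMod q))
    (hb : ∀ (j : Fin (2 * B + 1)) (t : ZMod q), b j t = ghat (t - (y + (j.val : ZMod q)))) :
    haveI : WellFoundedLT (Fin (2 * B + 1)) := Finite.to_wellFoundedLT
    (q : ℝ) / (Real.sqrt (((2 * B + 1 : ℕ) : ℝ) ^ 3) * 2 ^ (q - (2 * B + 1))) ≤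
      ‖gramSchmidt ℂ b (Fin.last (2 * B))‖ := by
  classical
  haveI : WellFoundedLT (Fin (2 * B + 1)) := Finite.to_wellFoundedLT
  have hq0 : 0 < q := by omega
  set M : ℕ := q - (2 * B + 1) with hM
  -- the support set
  set S : Finset (ZMod q) := Finset.univ.filter (fun x : ZMod q => x.val ≤ B ∨ q - B ≤ x.val)
    with hS
  have hcardS : S.card = 2 * B + 1 := by
    have h1 : S.card = ((Finset.range q).filter (fun v => v ≤ B ∨ q - B ≤ v)).card := by
      refine Finset.card_nbij' (fun x => x.val) (fun v => (v : ZMod q)) ?_ ?_ ?_ ?_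
      · intro x hx
        rw [Finset.mem_coe, hS, Finset.mem_filter] at hx
        simp only [Finset.mem_coe, Finset.mem_filter, Finset.mem_range]
        exact ⟨ZMod.val_lt x, hx.2⟩
      · intro v hv
        simp only [Finset.mem_coe, Finset.mem_filter, Finset.mem_range] at hv
        rw [Finset.mem_coe, hS, Finset.mem_filter]
        refine ⟨Finset.mem_univ _, ?_⟩
        rw [ZMod.val_natCast, Nat.mod_eq_of_lt hv.1]
        exact hv.2
      · intro x _; simp [ZMod.natCast_val, ZMod.cast_id]
      · intro v hv
        simp only [Finset.mem_coe, Finset.mem_filter, Finset.mem_range] at hv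
        simp [ZMod.val_natCast, Nat.mod_eq_of_lt hv.1]
    have h2 : (Finset.range q).filter (fun v => v ≤ B ∨ q - B ≤ v)
        = Finset.range (B + 1) ∪ Finset.Ico (q - B) q := by
      ext v
      simp only [Finset.mem_filter, Finset.mem_range, Finset.mem_union, Finset.mem_Ico]
      omega
    have h3 : Disjoint (Finset.range (B + 1)) (Finset.Ico (q - B) q) := by
      rw [Finset.disjoint_left]
      intro v hv hv'
      simp only [Finset.mem_range] at hv
      simp only [Finset.mem_Ico] at hv'
      omega
    rw [h1, h2, Finset.card_union_of_disjoint h3, Finset.card_range, Nat.card_Ico]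
    omega
  have hSmem : ∀ x : ZMod q, x ∈ S ↔ (x.val ≤ B ∨ q - B ≤ x.val) := by
    intro x; rw [hS, Finset.mem_filter]; simp
  -- nodes
  set z : ZMod q → ℂ := fun x => chi q (-x) with hz
  have hzinj : Set.InjOn z S := by
    intro x _ x' _ h
    have h1 : om q ^ (-x).val = om q ^ (-x').val := h
    have h2 := (om_prim q).pow_inj (ZMod.val_lt _) (ZMod.val_lt _) h1
    have h3 := ZMod.val_injective q h2
    exact neg_inj.1 h3
  set w : ZMod q → ℂ := fun x => (∏ l ∈ S.erase x, (z x - z l))⁻¹ with hw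
  -- bound on |w x|
  have hwabs : ∀ x ∈ S, ‖w x‖ ≤ 2 ^ M / q := by
    intro x hxS
    have hfull : ‖∏ l ∈ Finset.univ.erase x, (z x - z l)‖ = q := by
      have hre : ∏ l ∈ Finset.univ.erase x, (z x - z l)
          = ∏ m ∈ Finset.univ.erase (-x), (chi q (-x) - chi q m) := by
        refine Finset.prod_nbij' (fun l => -l) (fun m => -m) ?_ ?_ ?_ ?_ ?_
        · intro l hl
          simp only [Finset.mem_erase, Finset.mem_univ, and_true] at hl ⊢
          intro h; exact hl (neg_inj.1 h)
        · intro m hm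
          simp only [Finset.mem_erase, Finset.mem_univ, and_true] at hm ⊢
          intro h; apply hm; rw [← h]; ring
        · intro l _; simp
        · intro m _; simp
        · intro l _; rfl
      rw [hre, abs_prod_full]
    have hsplit : Finset.univ.erase x = (S.erase x) ∪ (Finset.univ \ S) := by
      ext l
      simp only [Finset.mem_erase, Finset.mem_univ, and_true, Finset.mem_union,
        Finset.mem_sdiff, true_and]
      constructor
      · intro h
        by_cases hl : l ∈ S
        · exact Or.inl ⟨h, hl⟩
        · exact Or.inr hl
      · rintro (⟨h, -⟩ | h)
        · exact h
        · rintro rfl; exact h hxS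
    have hdisj : Disjoint (S.erase x) (Finset.univ \ S) := by
      rw [Finset.disjoint_left]
      intro l hl hl'
      exact (Finset.mem_sdiff.1 hl').2 (Finset.mem_of_mem_erase hl)
    have hcard_out : (Finset.univ \ S).card = M := by
      rw [Finset.card_sdiff_of_subset (Finset.subset_univ S), Finset.card_univ, ZMod.card, hcardS]
    have hout_le : ‖∏ l ∈ Finset.univ \ S, (z x - z l)‖ ≤ 2 ^ M := by
      rw [norm_prod]
      calc ∏ l ∈ Finset.univ \ S, ‖z x - z l‖
          ≤ ∏ l ∈ Finset.univ \ S, 2 := by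
            refine Finset.prod_le_prod (fun l _ => norm_nonneg _) (fun l _ => ?_)
            calc ‖z x - z l‖ ≤ ‖z x‖ + ‖z l‖ := by
                  exact norm_sub_le _ _
            _ = 2 := by rw [hz]; simp only [chi_abs]; norm_num
        _ = 2 ^ M := by rw [Finset.prod_const, hcard_out]
    have hkey : (q : ℝ) ≤ ‖∏ l ∈ S.erase x, (z x - z l)‖ * 2 ^ M := by
      have := hfull
      rw [hsplit, Finset.prod_union hdisj, norm_mul] at this
      rw [← this]
      have h1 : (0:ℝ) ≤ ‖∏ l ∈ S.erase x, (z x - z l)‖ :=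
        norm_nonneg _
      exact mul_le_mul_of_nonneg_left hout_le h1
    have hP0 : (0:ℝ) < ‖∏ l ∈ S.erase x, (z x - z l)‖ := by
      by_contra h
      push_neg at h
      have : ‖∏ l ∈ S.erase x, (z x - z l)‖ = 0 :=
        le_antisymm h (norm_nonneg _)
      rw [this, zero_mul] at hkey
      have : (0:ℝ) < q := by exact_mod_cast hq0
      linarith
    have h2M : (0:ℝ) < 2 ^ M := by positivity
    rw [hw]
    simp only [norm_inv]
    have hstep : (q:ℝ) / 2 ^ M ≤ ‖∏ l ∈ S.erase x, (z x - z l)‖ := by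
      rw [div_le_iff₀ h2M]; linarith
    calc (‖∏ l ∈ S.erase x, (z x - z l)‖)⁻¹
        ≤ ((q:ℝ) / 2 ^ M)⁻¹ := by gcongr <;> positivity
      _ = 2 ^ M / q := by rw [inv_div]  -- the dual witness vector
  set a : ZMod q → ℂ := fun x => if x ∈ S then w x * chi q (y * x) else 0 with ha
  set u : EuclideanSpace ℂ (ZMod q) :=
    WithLp.toLp 2 (fun t => ∑ x : ZMod q, (starRingEnd ℂ) (a x) * chi q (t * x)) with hu
  have hut : ∀ t : ZMod q, u t = ∑ x : ZMod q, (starRingEnd ℂ) (a x) * chi q (t * x) :=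
    fun t => rfl
  have hconj_u : ∀ t : ZMod q,
      (starRingEnd ℂ) (u t) = ∑ x : ZMod q, a x * chi q (-(t * x)) := by
    intro t
    rw [hut, map_sum]
    refine Finset.sum_congr rfl (fun x _ => ?_)
    rw [map_mul, RingHomCompTriple.comp_apply, RingHom.id_apply, chi_conj]
  -- constants
  set Kq : ℂ := ((1 / Real.sqrt q : ℝ) : ℂ) with hKq
  set Kk : ℂ := ((1 / Real.sqrt (2 * B + 1) : ℝ) : ℂ) with hKk
  set cc : Fin (2 * B + 1) → ZMod q → ℂ :=
    fun j x' => if x' ∈ S then chi q (-((y + (j.val : ZMod q)) * x')) else 0 with hcc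
  have hbj : ∀ (j : Fin (2 * B + 1)) (t : ZMod q),
      b j t = Kq * Kk * ∑ x' : ZMod q, cc j x' * chi q (t * x') := by
    intro j t
    rw [hb, hghat]
    have hterm : ∀ x' : ZMod q,
        Complex.exp (2 * Real.pi * Complex.I * ((t - (y + (j.val : ZMod q))).val * x'.val) / q)
          * g x' = Kk * (cc j x' * chi q (t * x')) := by
      intro x'
      rw [exp_chi, hg]
      simp only [hcc]
      by_cases hx' : x' ∈ S
      · rw [if_pos ((hSmem x').1 hx'), if_pos hx']
        have hsplitchi : chi q ((t - (y + (j.val : ZMod q))) * x')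
            = chi q (-((y + (j.val : ZMod q)) * x')) * chi q (t * x') := by
          rw [← chi_add]; congr 1; ring
        rw [hsplitchi, hKk]; ring
      · rw [if_neg (fun h => hx' ((hSmem x').2 h)), if_neg hx']
        ring
    rw [Finset.sum_congr rfl (fun x' _ => hterm x'), ← Finset.mul_sum, hKq]
    ring
  -- inner products with the basis vectors
  have hinner : ∀ j : Fin (2 * B + 1),
      (inner ℂ u (b j) : ℂ) = Kq * Kk * q * ∑ x ∈ S, w x * z x ^ (j.val) := by
    intro j
    rw [PiLp.inner_apply]
    simp only [RCLike.inner_apply']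
    have h1 : ∀ t : ZMod q, (starRingEnd ℂ) (u t) * b j t
        = Kq * Kk * ((∑ x : ZMod q, a x * chi q (-(t * x)))
            * (∑ x' : ZMod q, cc j x' * chi q (t * x'))) := by
      intro t
      rw [hconj_u, hbj]
      ring
    rw [Finset.sum_congr rfl (fun t _ => h1 t), ← Finset.mul_sum, pairing]
    have h2 : ∑ x : ZMod q, a x * cc j x = ∑ x ∈ S, w x * z x ^ (j.val) := by
      have h3 : ∀ x ∈ S, a x * cc j x = w x * z x ^ (j.val) := by
        intro x hx
        simp only [ha, hcc, if_pos hx]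
        have h4 : chi q (y * x) * chi q (-((y + (j.val : ZMod q)) * x))
            = chi q ((j.val : ZMod q) * (-x)) := by
          rw [← chi_add]; congr 1; ring
        have h5 : chi q ((j.val : ZMod q) * (-x)) = z x ^ (j.val) := by
          rw [chi_nat_mul, hz]
        calc w x * chi q (y * x) * chi q (-((y + (j.val : ZMod q)) * x))
            = w x * (chi q (y * x) * chi q (-((y + (j.val : ZMod q)) * x))) := by ring
          _ = w x * z x ^ (j.val) := by rw [h4, h5]
      rw [← Finset.sum_subset (Finset.subset_univ S)]
      · exact Finset.sum_congr rfl h3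
      · intro x _ hx
        simp only [ha, hcc, if_neg hx, zero_mul]
    rw [h2]
    ring
  -- Lagrange: the sum is 0 for j < last, 1 for j = last
  have hlag : ∀ j : Fin (2 * B + 1),
      ∑ x ∈ S, w x * z x ^ (j.val) = if j.val = 2 * B then 1 else 0 := by
    intro j
    have hjlt : j.val < S.card := by rw [hcardS]; exact j.isLt
    have := lag_coeff S z hzinj j.val hjlt
    rw [hcardS] at this
    have hsub : 2 * B + 1 - 1 = 2 * B := by omega
    rw [hsub] at this
    rw [← this]
    refine Finset.sum_congr rfl (fun x _ => ?_)
    rw [hw]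
    ring
  -- u is orthogonal to the previous basis vectors
  have hzero : ∀ j : Fin (2 * B + 1), j < Fin.last (2 * B) → (inner ℂ u (b j) : ℂ) = 0 := by
    intro j hj
    rw [hinner j, hlag j]
    have : j.val ≠ 2 * B := by
      have := Fin.lt_iff_val_lt_val.1 hj
      simp only [Fin.val_last] at this
      omega
    rw [if_neg this, mul_zero]
  -- inner product with gramSchmidt vector
  have hsqq : Real.sqrt q * Real.sqrt q = q := Real.mul_self_sqrt (by positivity)
  have hsqk : Real.sqrt (2 * B + 1 : ℝ) * Real.sqrt (2 * B + 1 : ℝ) = (2 * B + 1 : ℝ) :=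
    Real.mul_self_sqrt (by positivity)
  have hsq0 : (0:ℝ) < Real.sqrt q := Real.sqrt_pos.2 (by exact_mod_cast hq0)
  have hsk0 : (0:ℝ) < Real.sqrt (2 * B + 1 : ℝ) := Real.sqrt_pos.2 (by positivity)
  have hgsinner : (inner ℂ u (gramSchmidt ℂ b (Fin.last (2 * B))) : ℂ)
      = ((Real.sqrt q / Real.sqrt (2 * B + 1 : ℝ) : ℝ) : ℂ) := by
    rw [gs_inner_eq b (Fin.last (2 * B)) u hzero, hinner, hlag]
    simp only [Fin.val_last, if_true, eq_self_iff_true, mul_one]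
    have hr : (1 / Real.sqrt q) * (1 / Real.sqrt (2 * (B:ℝ) + 1)) * (q:ℝ)
        = Real.sqrt q / Real.sqrt (2 * (B:ℝ) + 1) := by
      field_simp
      rw [sq, hsqq]
    rw [hKq, hKk]
    calc (((1 / Real.sqrt q : ℝ)) : ℂ) * (((1 / Real.sqrt (2 * (B:ℝ) + 1) : ℝ)) : ℂ) * (q : ℂ)
        = (((1 / Real.sqrt q) * (1 / Real.sqrt (2 * (B:ℝ) + 1)) * q : ℝ) : ℂ) := by
          push_cast; ring
      _ = _ := by rw [hr]
  -- norm of u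
  have huu : (inner ℂ u u : ℂ) = (q : ℂ) * ∑ x : ZMod q, a x * (starRingEnd ℂ) (a x) := by
    rw [PiLp.inner_apply]
    simp only [RCLike.inner_apply']
    have h1 : ∀ t : ZMod q, (starRingEnd ℂ) (u t) * u t
        = (∑ x : ZMod q, a x * chi q (-(t * x)))
            * (∑ x' : ZMod q, (starRingEnd ℂ) (a x') * chi q (t * x')) := by
      intro t; rw [hconj_u, hut]
    rw [Finset.sum_congr rfl (fun t _ => h1 t), pairing]
  have hnormsq : ‖u‖ ^ 2 = q * ∑ x : ZMod q, Complex.normSq (a x) := by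
    have h1 := inner_self_eq_norm_sq (𝕜 := ℂ) u
    rw [huu] at h1
    rw [← h1]
    have h2 : ∀ x : ZMod q, a x * (starRingEnd ℂ) (a x) = (Complex.normSq (a x) : ℂ) :=
      fun x => Complex.mul_conj (a x)
    simp_rw [h2]
    have h3 : ((q : ℂ) * ∑ x : ZMod q, (Complex.normSq (a x) : ℂ))
        = (((q : ℝ) * ∑ x : ZMod q, Complex.normSq (a x) : ℝ) : ℂ) := by
      push_cast; ring
    rw [h3]
    simp
  have hsum_bound : ∑ x : ZMod q, Complex.normSq (a x) ≤ (2 * B + 1 : ℝ) * ((2:ℝ) ^ M / (q:ℝ)) ^ 2 := by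
    have h1 : ∑ x : ZMod q, Complex.normSq (a x) = ∑ x ∈ S, Complex.normSq (a x) := by
      symm
      apply Finset.sum_subset (Finset.subset_univ S)
      intro x _ hx
      simp [ha, if_neg hx]
    rw [h1]
    have h2 : ∀ x ∈ S, Complex.normSq (a x) ≤ ((2:ℝ) ^ M / (q:ℝ)) ^ 2 := by
      intro x hx
      rw [Complex.normSq_eq_norm_sq]
      have h3 : ‖a x‖ ≤ 2 ^ M / q := by
        simp only [ha, if_pos hx]
        rw [norm_mul, chi_abs, mul_one]
        exact hwabs x hx
      exact pow_le_pow_left₀ (norm_nonneg _) h3 2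
    calc ∑ x ∈ S, Complex.normSq (a x) ≤ ∑ x ∈ S, ((2:ℝ) ^ M / (q:ℝ)) ^ 2 := Finset.sum_le_sum h2
      _ = (2 * B + 1 : ℝ) * ((2:ℝ) ^ M / (q:ℝ)) ^ 2 := by
          rw [Finset.sum_const, hcardS, nsmul_eq_mul]
          push_cast; ring
  set C : ℝ := Real.sqrt (2 * B + 1 : ℝ) * 2 ^ M / Real.sqrt q with hC
  have hC0 : 0 < C := by rw [hC]; positivity
  have hqR : (0:ℝ) < (q:ℝ) := by exact_mod_cast hq0
  have hunorm : ‖u‖ ≤ C := by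
    have h1 : ‖u‖ ^ 2 ≤ C ^ 2 := by
      rw [hnormsq, hC]
      have hCsq : (Real.sqrt (2 * B + 1 : ℝ) * 2 ^ M / Real.sqrt q) ^ 2
          = (2 * B + 1 : ℝ) * (2 ^ M) ^ 2 / q := by
        rw [div_pow, mul_pow, Real.sq_sqrt (by positivity : (0:ℝ) ≤ 2 * (B:ℝ) + 1),
          Real.sq_sqrt hqR.le]
      rw [hCsq]
      calc (q:ℝ) * ∑ x : ZMod q, Complex.normSq (a x)
          ≤ (q:ℝ) * ((2 * B + 1 : ℝ) * ((2:ℝ) ^ M / (q:ℝ)) ^ 2) :=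
            mul_le_mul_of_nonneg_left hsum_bound hqR.le
        _ = (2 * B + 1 : ℝ) * (2 ^ M) ^ 2 / q := by
            field_simp
    have h2 := Real.sqrt_le_sqrt h1
    rwa [Real.sqrt_sq (norm_nonneg u), Real.sqrt_sq hC0.le] at h2
  -- final assembly
  set G : ℝ := ‖gramSchmidt ℂ b (Fin.last (2 * B))‖ with hG
  have hg0 : (0:ℝ) ≤ G := norm_nonneg _
  have hCS : Real.sqrt q / Real.sqrt (2 * B + 1 : ℝ) ≤ ‖u‖ * G := by
    have h1 := norm_inner_le_norm (𝕜 := ℂ) u (gramSchmidt ℂ b (Fin.last (2 * B)))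
    rw [hgsinner] at h1
    rw [Complex.norm_real] at h1
    exact le_trans (le_abs_self _) h1
  have hkey : (q:ℝ) ≤ (2 * B + 1 : ℝ) * 2 ^ M * G := by
    have h2 : Real.sqrt q / Real.sqrt (2 * B + 1 : ℝ) ≤ C * G :=
      hCS.trans (mul_le_mul_of_nonneg_right hunorm hg0)
    rw [hC, div_mul_eq_mul_div, div_le_div_iff₀ hsk0 hsq0] at h2
    -- h2 : √q * √q ≤ √k * 2^M * G * √k
    calc (q:ℝ) = Real.sqrt q * Real.sqrt q := hsqq.symm
      _ ≤ Real.sqrt (2 * B + 1 : ℝ) * 2 ^ M * G * Real.sqrt (2 * B + 1 : ℝ) := h2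
      _ = (Real.sqrt (2 * B + 1 : ℝ) * Real.sqrt (2 * B + 1 : ℝ)) * (2 ^ M * G) := by ring
      _ = (2 * B + 1 : ℝ) * 2 ^ M * G := by rw [hsqk]; ring
  have hk3 : (2 * B + 1 : ℝ) ≤ Real.sqrt (((2 * B + 1 : ℕ) : ℝ) ^ 3) := by
    rw [Real.le_sqrt (by positivity) (by positivity)]
    have hcast : (((2 * B + 1 : ℕ) : ℝ)) = 2 * (B:ℝ) + 1 := by push_cast; ring
    rw [hcast]
    nlinarith [sq_nonneg (2 * (B:ℝ) + 1), (by positivity : (0:ℝ) ≤ (B:ℝ))]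
  show (q : ℝ) / (Real.sqrt (((2 * B + 1 : ℕ) : ℝ) ^ 3) * 2 ^ M) ≤ G
  rw [div_le_iff₀ (by positivity)]
  calc (q:ℝ) ≤ (2 * B + 1 : ℝ) * 2 ^ M * G := hkey
    _ ≤ Real.sqrt (((2 * B + 1 : ℕ) : ℝ) ^ 3) * 2 ^ M * G :=
        mul_le_mul_of_nonneg_right (mul_le_mul_of_nonneg_right hk3 (by positivity)) hg0
    _ = G * (Real.sqrt (((2 * B + 1 : ℕ) : ℝ) ^ 3) * 2 ^ M) := by ring
end

section
/- Let q = ∏_{i=1}^k p_i with k > 1 and each p_i ≥ 2, m = n^k, and T = ∏_{i=1}^k ⌊p_i/2⌋. For any matrix A ∈ ℤ_q^{(n-1)×m} there exists a nonzero integer vector x ∈ ℤ^m with ‖x‖_∞ ≤ T and A·x ≡ 0 (mod q). -/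
private lemma aux_nk : ∀ k, 2 ≤ k → ∀ n, 2 ≤ n → 2 * k * (n - 1) ≤ n ^ k := by
  intro k hk
  induction k, hk using Nat.le_induction with
  | base =>
    intro n hn
    obtain ⟨m, rfl⟩ : ∃ m, n = m + 2 := ⟨n - 2, by omega⟩
    have : (m + 2 : ℕ) - 1 = m + 1 := by omega
    rw [this]
    nlinarith [sq_nonneg m]
  | succ k hk ih =>
    intro n hn
    have h1 := ih n hn
    have h2 : (1 : ℕ) ≤ n - 1 := by omega
    calc 2 * (k + 1) * (n - 1) ≤ 2 * (2 * k * (n - 1)) := by nlinarith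
      _ ≤ 2 * n ^ k := by omega
      _ ≤ n * n ^ k := by
          have : 0 < n ^ k := by positivity
          nlinarith
      _ = n ^ (k + 1) := by ring

theorem stmt16 (k n : ℕ) (hk : 1 < k) (hn : 0 < n)
    (p : Fin k → ℕ) (hp : ∀ i, 2 ≤ p i)
    (q : ℕ) (hq : q = ∏ i, p i)
    (A : Matrix (Fin (n - 1)) (Fin (n ^ k)) (ZMod q)) :
    ∃ x : Fin (n ^ k) → ℤ, x ≠ 0 ∧ (∀ j, |x j| ≤ ((∏ i, p i / 2 : ℕ) : ℤ)) ∧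
      A.mulVec (fun j => (x j : ZMod q)) = 0 := by
  set T : ℕ := ∏ i, p i / 2 with hT
  -- basic facts
  have ht1 : ∀ i, 1 ≤ p i / 2 := fun i => by have := hp i; omega
  have hT1 : 1 ≤ T := Finset.one_le_prod' fun i _ => ht1 i
  have hq1 : 1 ≤ q := by
    rw [hq]; exact Finset.one_le_prod' fun i _ => by have := hp i; omega
  haveI : NeZero q := ⟨by omega⟩
  -- key counting inequality : q < (T+1)^(2k)
  have hkey : q < (T + 1) ^ (2 * k) := by
    have hsingle : ∀ i : Fin k, p i / 2 + 1 ≤ T + 1 := by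
      intro i
      have : p i / 2 ≤ T :=
        Finset.single_le_prod' (fun j _ => ht1 j) (Finset.mem_univ i)
      omega
    have h1 : q < ∏ i : Fin k, (p i / 2 + 1) ^ 2 := by
      rw [hq]
      apply Finset.prod_lt_prod_of_nonempty
      · intro i _
        have := hp i
        omega
      · intro i _
        have h2 := hp i
        have h3 : p i ≤ 2 * (p i / 2) + 1 := by omega
        have h4 := ht1 i
        nlinarith
      · exact ⟨⟨0, by omega⟩, Finset.mem_univ _⟩
    have h2 : ∏ i : Fin k, (p i / 2 + 1) ^ 2 ≤ (T + 1) ^ (2 * k) := by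
      calc ∏ i : Fin k, (p i / 2 + 1) ^ 2 ≤ ∏ _i : Fin k, (T + 1) ^ 2 := by
            apply Finset.prod_le_prod (fun _ _ => by positivity)
            intro i _
            exact Nat.pow_le_pow_left (hsingle i) 2
        _ = ((T + 1) ^ 2) ^ k := by
            rw [Finset.prod_const, Finset.card_univ, Fintype.card_fin]
        _ = (T + 1) ^ (2 * k) := by rw [← pow_mul]
    omega
  -- cardinality inequality
  have hcard : q ^ (n - 1) < (T + 1) ^ (n ^ k) := by
    rcases Nat.lt_or_ge n 2 with hn2 | hn2
    · -- n = 1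
      have hne : n = 1 := by omega
      subst hne
      simp only [Nat.sub_self, pow_zero, one_pow, pow_one]
      omega
    · have hexp : 2 * k * (n - 1) ≤ n ^ k := aux_nk k (by omega) n hn2
      calc q ^ (n - 1) < ((T + 1) ^ (2 * k)) ^ (n - 1) :=
            Nat.pow_lt_pow_left hkey (by omega)
        _ = (T + 1) ^ (2 * k * (n - 1)) := by rw [← pow_mul]
        _ ≤ (T + 1) ^ (n ^ k) := Nat.pow_le_pow_right (by omega) hexp
  -- pigeonhole
  have hcards : Fintype.card (Fin (n - 1) → ZMod q) <
      Fintype.card (Fin (n ^ k) → Fin (T + 1)) := by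
    simp only [Fintype.card_fun, Fintype.card_fin, ZMod.card]
    exact hcard
  obtain ⟨a, b, hab, hfeq⟩ :=
    Fintype.exists_ne_map_eq_of_card_lt
      (fun v : Fin (n ^ k) → Fin (T + 1) =>
        A.mulVec fun j => ((v j : ℕ) : ZMod q)) hcards
  refine ⟨fun j => (a j : ℤ) - (b j : ℤ), ?_, ?_, ?_⟩
  · intro h
    apply hab
    funext j
    have := congrFun h j
    simp only [Pi.zero_apply, sub_eq_zero] at this
    exact Fin.ext (by exact_mod_cast this)
  · intro j
    have h1 : (a j : ℕ) ≤ T := by omega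
    have h2 : (b j : ℕ) ≤ T := by omega
    rw [abs_le]
    constructor <;> push_cast <;> omega
  · have : (fun j => (((a j : ℤ) - (b j : ℤ) : ℤ) : ZMod q)) =
        (fun j => ((a j : ℕ) : ZMod q)) - (fun j => ((b j : ℕ) : ZMod q)) := by
      funext j
      simp only [Pi.sub_apply]
      push_cast
      ring
    rw [this, Matrix.mulVec_sub, hfeq, sub_self]
end
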